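/- arXiv:2409.18525 — 3 statements merged into one kernel-verified Lean document; each statement's English description precedes it below -/
import Mathlib

section
/- (Weighted key estimate.) Let Ω ⊆ ℝⁿ be open, let φ ∈ Φ_w(Ω) satisfy (A0), (A1)_ω, (A2)_ω and (aInc)_p with p ∈ (1,∞), and let ω ∈ A_p. Then there exist β > 0 and a nonnegative h ∈ L¹(Ω,ω) ∩ L^∞(Ω) such that φ(x, (β/|B|)∫_{B∩Ω}|f| dy)^{1/p} ≤ (1/|B|)∫_{B∩Ω} φ(y,|f|)^{1/p} dy + h(x)^{1/p} + (1/|B|)∫_{B∩Ω} h(y)^{1/p} dy for every open ball B, a.e. x ∈ B∩Ω, and every f ∈ L^φ(Ω,ω) with ρ_φ^ω(f) ≤ 1. -/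
open MeasureTheory Metric Filter Set
open scoped ENNReal NNReal Topology

noncomputable section

/-- `ℝⁿ` with Lebesgue measure. -/
abbrev Rn (n : ℕ) : Type := EuclideanSpace ℝ (Fin n)

/-- The `ω`-measure of a set `E`, `ω(E) = ∫_E ω(x) dx`. -/
def wSet {n : ℕ} (ω : Rn n → ℝ≥0∞) (E : Set (Rn n)) : ℝ≥0∞ := ∫⁻ x in E, ω x

/-- A weight: a measurable, a.e. positive and finite, locally integrable function. -/
def IsWeight {n : ℕ} (ω : Rn n → ℝ≥0∞) : Prop :=
  Measurable ω ∧ (∀ᵐ x ∂(volume : Measure (Rn n)), 0 < ω x ∧ ω x < ∞) ∧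
    ∀ (z : Rn n) (r : ℝ), 0 < r → wSet ω (ball z r) ≠ ∞

/-- The Muckenhoupt class `A_q`, `1 < q < ∞`:
`sup_B |B|^{-q} ω(B) (∫_B ω^{-q'/q})^{q-1} < ∞` where `q'/q = 1/(q-1)`. -/
def MuckenhouptAq {n : ℕ} (q : ℝ) (ω : Rn n → ℝ≥0∞) : Prop :=
  IsWeight ω ∧ ∃ C : ℝ≥0∞, C ≠ ∞ ∧ ∀ (z : Rn n) (r : ℝ), 0 < r →
    (volume (ball z r)) ^ (-q) * wSet ω (ball z r) *
      (∫⁻ y in ball z r, (ω y) ^ (-(1 / (q - 1)))) ^ (q - 1) ≤ C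

/-- The class `A_∞ = ⋃_{1<q<∞} A_q`. -/
def MuckenhouptAinfty {n : ℕ} (ω : Rn n → ℝ≥0∞) : Prop :=
  ∃ q : ℝ, 1 < q ∧ MuckenhouptAq q ω

/-- `(aInc)_p`: `t ↦ φ(x,t)/t^p` is almost increasing, uniformly in a.e. `x ∈ Ω`. -/
def AInc {n : ℕ} (Ω : Set (Rn n)) (φ : Rn n → ℝ≥0∞ → ℝ≥0∞) (p : ℝ) : Prop :=
  ∃ a : ℝ≥0, 1 ≤ a ∧ ∀ᵐ x ∂(volume : Measure (Rn n)), x ∈ Ω →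
    ∀ s t : ℝ≥0, 0 < s → s < t →
      φ x s / (s : ℝ≥0∞) ^ p ≤ a * (φ x t / (t : ℝ≥0∞) ^ p)

/-- A weak Φ-function on `Ω`. -/
structure IsWeakPhi {n : ℕ} (Ω : Set (Rn n)) (φ : Rn n → ℝ≥0∞ → ℝ≥0∞) : Prop where
  meas : ∀ f : Rn n → ℝ≥0∞, Measurable f → Measurable fun x => φ x (f x)
  mono : ∀ᵐ x ∂(volume : Measure (Rn n)), x ∈ Ω → Monotone (φ x)
  map_zero : ∀ᵐ x ∂(volume : Measure (Rn n)), x ∈ Ω → φ x 0 = 0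
  tendsto_zero : ∀ᵐ x ∂(volume : Measure (Rn n)), x ∈ Ω →
    Tendsto (fun t : ℝ≥0 => φ x t) (𝓝[>] 0) (𝓝 0)
  tendsto_top : ∀ᵐ x ∂(volume : Measure (Rn n)), x ∈ Ω →
    Tendsto (fun t : ℝ≥0 => φ x t) atTop (𝓝 ∞)
  aInc_one : AInc Ω φ 1

/-- Condition (A0). -/
def A0 {n : ℕ} (Ω : Set (Rn n)) (φ : Rn n → ℝ≥0∞ → ℝ≥0∞) : Prop :=
  ∃ β₀ : ℝ≥0, 0 < β₀ ∧ β₀ ≤ 1 ∧ ∀ᵐ x ∂(volume : Measure (Rn n)), x ∈ Ω →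
    φ x β₀ ≤ 1 ∧ 1 ≤ φ x ((β₀ : ℝ≥0∞)⁻¹)

/-- Condition (A1)_ω. -/
def A1w {n : ℕ} (Ω : Set (Rn n)) (ω : Rn n → ℝ≥0∞) (φ : Rn n → ℝ≥0∞ → ℝ≥0∞) : Prop :=
  ∃ β₁ : ℝ≥0, 0 < β₁ ∧ β₁ ≤ 1 ∧ ∀ (z : Rn n) (r : ℝ), 0 < r → wSet ω (ball z r) ≤ 1 →
    ∀ᵐ x ∂(volume : Measure (Rn n)), ∀ᵐ y ∂(volume : Measure (Rn n)),
      x ∈ ball z r ∩ Ω → y ∈ ball z r ∩ Ω →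
        ∀ t : ℝ≥0, 1 ≤ φ y t → φ y t ≤ (wSet ω (ball z r))⁻¹ →
          φ x (β₁ * t) ≤ φ y t

/-- `h ∈ L¹(Ω,ω) ∩ L^∞(Ω)`, `h ≥ 0`. -/
def MemL1wLinf {n : ℕ} (Ω : Set (Rn n)) (ω : Rn n → ℝ≥0∞) (h : Rn n → ℝ≥0) : Prop :=
  Measurable h ∧ (∫⁻ x in Ω, (h x : ℝ≥0∞) * ω x) ≠ ∞ ∧
    ∃ C : ℝ≥0, ∀ᵐ x ∂(volume : Measure (Rn n)), x ∈ Ω → h x ≤ C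

/-- Condition (A2)_ω. -/
def A2w {n : ℕ} (Ω : Set (Rn n)) (ω : Rn n → ℝ≥0∞) (φ : Rn n → ℝ≥0∞ → ℝ≥0∞) : Prop :=
  ∀ s : ℝ≥0, 0 < s → ∃ β₂ : ℝ≥0, 0 < β₂ ∧ β₂ ≤ 1 ∧ ∃ h : Rn n → ℝ≥0,
    MemL1wLinf Ω ω h ∧
      ∀ᵐ x ∂(volume : Measure (Rn n)), ∀ᵐ y ∂(volume : Measure (Rn n)),
        x ∈ Ω → y ∈ Ω → ∀ t : ℝ≥0, φ y t ≤ s →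
          φ x (β₂ * t) ≤ φ y t + h x + h y

/-- The weighted modular `ρ_φ^ω(g) = ∫_Ω φ(x, g(x)) ω(x) dx` (applied to `g = |f|`). -/
def wModular {n : ℕ} (Ω : Set (Rn n)) (ω : Rn n → ℝ≥0∞) (φ : Rn n → ℝ≥0∞ → ℝ≥0∞)
    (g : Rn n → ℝ≥0∞) : ℝ≥0∞ := ∫⁻ x in Ω, φ x (g x) * ω x

/-- The weighted Luxemburg norm `‖f‖_{L^φ(Ω,ω)}` (applied to `g = |f|`). -/
def wNorm {n : ℕ} (Ω : Set (Rn n)) (ω : Rn n → ℝ≥0∞) (φ : Rn n → ℝ≥0∞ → ℝ≥0∞)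
    (g : Rn n → ℝ≥0∞) : ℝ≥0∞ :=
  ⨅ (lam : ℝ≥0) (_ : 0 < lam)
    (_ : wModular Ω ω φ (fun x => g x / lam) ≤ 1), (lam : ℝ≥0∞)

/-- Membership in the weighted generalized Orlicz space `L^φ(Ω,ω)` (applied to `g = |f|`). -/
def MemLw {n : ℕ} (Ω : Set (Rn n)) (ω : Rn n → ℝ≥0∞) (φ : Rn n → ℝ≥0∞ → ℝ≥0∞)
    (g : Rn n → ℝ≥0∞) : Prop :=
  ∃ lam : ℝ≥0, 0 < lam ∧ wModular Ω ω φ (fun x => g x / lam) ≤ 1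

/-- The Hardy–Littlewood maximal operator (relative to `Ω`), applied to `g = |f|`. -/
def maximal {n : ℕ} (Ω : Set (Rn n)) (g : Rn n → ℝ≥0∞) (x : Rn n) : ℝ≥0∞ :=
  ⨆ (z : Rn n) (r : ℝ) (_ : 0 < r) (_ : x ∈ ball z r),
    (volume (ball z r))⁻¹ * ∫⁻ y in ball z r ∩ Ω, g y

/-- An `x`-independent weak Φ-function. -/
structure IsWeakPhi0 (ψ : ℝ≥0∞ → ℝ≥0∞) : Prop where
  mono : Monotone ψ
  map_zero : ψ 0 = 0
  tendsto_zero : Tendsto (fun t : ℝ≥0 => ψ t) (𝓝[>] 0) (𝓝 0)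
  tendsto_top : Tendsto (fun t : ℝ≥0 => ψ t) atTop (𝓝 ∞)
  aInc_one : ∃ a : ℝ≥0, 1 ≤ a ∧ ∀ s t : ℝ≥0, 0 < s → s < t →
    ψ s / (s : ℝ≥0∞) ≤ a * (ψ t / (t : ℝ≥0∞))

/-- The real-valued reciprocal `1/p(x)` of an exponent `p : Ω → [1,∞]` (with `1/∞ = 0`). -/
def invExp {n : ℕ} (p : Rn n → ℝ≥0∞) (x : Rn n) : ℝ := ((p x)⁻¹).toReal

/-- Local log-Hölder continuity of `g` on `Ω`. -/
def LocallyLogHolder {n : ℕ} (Ω : Set (Rn n)) (g : Rn n → ℝ) : Prop :=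
  ∃ c : ℝ, 0 < c ∧ ∀ x ∈ Ω, ∀ y ∈ Ω,
    |g x - g y| ≤ c / Real.log (Real.exp 1 + 1 / dist x y)

/-- The log-Hölder decay condition for `g` with limit `g∞`. -/
def LogHolderDecay {n : ℕ} (Ω : Set (Rn n)) (g : Rn n → ℝ) (ginf : ℝ) : Prop :=
  ∃ c : ℝ, 0 < c ∧ ∀ x ∈ Ω, |g x - ginf| ≤ c / Real.log (Real.exp 1 + ‖x‖)

/-- `1/p ∈ P^log(Ω)`: local log-Hölder continuity plus log-Hölder decay. -/
def PLog {n : ℕ} (Ω : Set (Rn n)) (p : Rn n → ℝ≥0∞) : Prop :=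
  LocallyLogHolder Ω (invExp p) ∧
    ∃ pinf : ℝ≥0∞, 1 ≤ pinf ∧ LogHolderDecay Ω (invExp p) ((pinf)⁻¹).toReal

/-- The variable exponent Φ-function `φ(x,t) = t^{p(x)}`, with
`t^∞ := ∞·χ_{(1,∞)}(t)`. -/
def varExp {n : ℕ} (p : Rn n → ℝ≥0∞) (x : Rn n) (t : ℝ≥0∞) : ℝ≥0∞ :=
  if p x = ∞ then (if t ≤ 1 then 0 else ∞) else t ^ (p x).toReal

/-- The double phase functional `φ(x,t) = t^p + a(x) t^q`. -/
def doublePhase {n : ℕ} (a : Rn n → ℝ) (p q : ℝ) (x : Rn n) (t : ℝ≥0∞) : ℝ≥0∞ :=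
  t ^ p + ENNReal.ofReal (a x) * t ^ q

namespace WKE


/-- Three-term subadditivity of `t ↦ t^(1/p)` on `ℝ≥0∞`. -/
lemma rpow3 {p : ℝ} (hp : 1 < p) (x y z : ℝ≥0∞) :
    (x + y + z) ^ (1/p) ≤ x ^ (1/p) + y ^ (1/p) + z ^ (1/p) := by
  have h0 : 0 ≤ 1/p := by positivity
  have h1 : 1/p ≤ 1 := by
    rw [div_le_one (by linarith)]; linarith
  calc (x + y + z) ^ (1/p) ≤ (x + y) ^ (1/p) + z ^ (1/p) :=
        ENNReal.rpow_add_le_add_rpow _ _ h0 h1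
    _ ≤ x ^ (1/p) + y ^ (1/p) + z ^ (1/p) := by
        gcongr
        exact ENNReal.rpow_add_le_add_rpow _ _ h0 h1

/-- Cross-multiplied form of an almost-increasing inequality. -/
lemma cross {x y a c d : ℝ≥0∞} (h : x / c ≤ a * (y / d))
    (hc0 : c ≠ 0) (hc : c ≠ ∞) (hd0 : d ≠ 0) (hd : d ≠ ∞) :
    x * d ≤ a * c * y := by
  calc x * d = x / c * c * d := by rw [ENNReal.div_mul_cancel hc0 hc]
    _ ≤ a * (y / d) * c * d := by gcongr
    _ = a * c * (y / d * d) := by ring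
    _ = a * c * y := by rw [ENNReal.div_mul_cancel hd0 hd]

/-- Jensen-type inequality for functions with the cross property. -/
lemma jensen {α : Type*} [MeasurableSpace α] (μ : Measure α) {S : Set α}
    (hS : MeasurableSet S) {ν : ℝ≥0∞} (hν0 : ν ≠ 0) (hνt : ν ≠ ∞) (hSν : μ S ≤ ν)
    {g : α → ℝ≥0∞} (hg : Measurable g) (hgf : ∀ y, g y < ∞)
    {ψ : ℝ≥0∞ → ℝ≥0∞} {A : ℝ≥0∞}
    (hcross : ∀ u v : ℝ≥0∞, 0 < u → u ≤ v → v ≠ ∞ → ψ u * v ≤ A * u * ψ v)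
    (hψm : Measurable ψ) (hψ0 : ψ 0 = 0)
    (hIfin : ν⁻¹ * ∫⁻ y in S, g y ∂μ ≠ ∞) :
    ψ ((ν⁻¹ * ∫⁻ y in S, g y ∂μ)/2) ≤ A * (ν⁻¹ * ∫⁻ y in S, ψ (g y) ∂μ) := by
  set I : ℝ≥0∞ := ν⁻¹ * ∫⁻ y in S, g y ∂μ with hI
  rcases eq_or_ne I 0 with hI0 | hIne
  · simp [hI0, hψ0]
  have hI2 : I / 2 ≠ 0 := by simp [ENNReal.div_eq_zero_iff, hIne]
  have hI2t : I / 2 ≠ ∞ := ne_top_of_le_ne_top hIfin ENNReal.half_le_self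
  have hEq : ∫⁻ y in S, g y ∂μ = ν * I := by
    rw [hI, ← mul_assoc, ENNReal.mul_inv_cancel hν0 hνt, one_mul]
  set E : Set α := S ∩ {y | I/2 < g y} with hE
  have hEm : MeasurableSet E := hS.inter (measurableSet_lt measurable_const hg)
  have hsplit : ∫⁻ y in S, g y ∂μ = (∫⁻ y in S \ E, g y ∂μ) + ∫⁻ y in E, g y ∂μ := by
    rw [← lintegral_union hEm disjoint_sdiff_left, Set.diff_union_of_subset Set.inter_subset_left]
  have hlow : ∫⁻ y in S \ E, g y ∂μ ≤ ν * (I/2) := by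
    have : ∀ y ∈ S \ E, g y ≤ I/2 := by
      intro y hy
      by_contra hgt
      exact hy.2 ⟨hy.1, lt_of_not_ge hgt⟩
    calc ∫⁻ y in S \ E, g y ∂μ ≤ ∫⁻ _ in S \ E, I/2 ∂μ :=
          setLIntegral_mono' (hS.diff hEm) this
      _ = I/2 * μ (S \ E) := by rw [setLIntegral_const]
      _ ≤ I/2 * ν := by gcongr; exact le_trans (measure_mono Set.diff_subset) hSν
      _ = ν * (I/2) := mul_comm _ _
  have hup : ν * (I/2) ≤ ∫⁻ y in E, g y ∂μ := by
    have h1 : ν * I ≤ ν * (I/2) + ∫⁻ y in E, g y ∂μ := by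
      rw [← hEq, hsplit]; gcongr
    have h2 : ν * I = ν * (I/2) + ν * (I/2) := by
      rw [← mul_add, ENNReal.add_halves]
    rw [h2] at h1
    exact (ENNReal.add_le_add_iff_left (by
      exact ENNReal.mul_ne_top hνt hI2t)).mp h1
  have hpt : ∀ y ∈ E, ψ (I/2) * g y ≤ A * (I/2) * ψ (g y) := by
    intro y hy
    exact hcross (I/2) (g y) (pos_iff_ne_zero.mpr hI2) (le_of_lt hy.2) (hgf y).ne
  have hint : ψ (I/2) * ∫⁻ y in E, g y ∂μ ≤ A * (I/2) * ∫⁻ y in E, ψ (g y) ∂μ := by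
    rw [← lintegral_const_mul _ hg,
      ← lintegral_const_mul _ (show Measurable fun y => ψ (g y) from hψm.comp hg)]
    exact setLIntegral_mono' hEm hpt
  have hmain : ψ (I/2) * (ν * (I/2)) ≤ A * (I/2) * ∫⁻ y in S, ψ (g y) ∂μ := by
    calc ψ (I/2) * (ν * (I/2)) ≤ ψ (I/2) * ∫⁻ y in E, g y ∂μ := by gcongr
      _ ≤ A * (I/2) * ∫⁻ y in E, ψ (g y) ∂μ := hint
      _ ≤ A * (I/2) * ∫⁻ y in S, ψ (g y) ∂μ := by
          gcongr
          exact Set.inter_subset_left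
  -- cancel I/2 and ν
  have hcancel : ψ (I/2) * ν ≤ A * ∫⁻ y in S, ψ (g y) ∂μ := by
    have := hmain
    rw [show ψ (I/2) * (ν * (I/2)) = ψ (I/2) * ν * (I/2) by ring,
      show A * (I/2) * ∫⁻ y in S, ψ (g y) ∂μ = A * (∫⁻ y in S, ψ (g y) ∂μ) * (I/2) by ring] at this
    exact (ENNReal.mul_le_mul_iff_left hI2 hI2t).mp this
  calc ψ (I/2) ≤ A * (∫⁻ y in S, ψ (g y) ∂μ) / ν := by
        rw [ENNReal.le_div_iff_mul_le (Or.inl hν0) (Or.inl hνt)]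
        exact hcancel
    _ = A * (ν⁻¹ * ∫⁻ y in S, ψ (g y) ∂μ) := by
        rw [div_eq_mul_inv, mul_assoc, mul_comm (∫⁻ y in S, ψ (g y) ∂μ) ν⁻¹]

/-- Hölder's inequality with an `A_p` weight: unweighted set integrals are controlled by
weighted ones. -/
lemma holder {α : Type*} [MeasurableSpace α] (μ : Measure α)
    {ω : α → ℝ≥0∞} (hωm : Measurable ω)
    (hωpos : ∀ᵐ y ∂μ, 0 < ω y ∧ ω y < ∞)
    {p : ℝ} (hp1 : 1 < p) {B : Set α}
    {C ν : ℝ≥0∞}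
    (hAq : ν ^ (-p) * (∫⁻ y in B, ω y ∂μ) * (∫⁻ y in B, ω y ^ (-(1/(p-1))) ∂μ) ^ (p-1) ≤ C)
    (hν0 : ν ≠ 0) (hνt : ν ≠ ∞)
    (hwB0 : (∫⁻ y in B, ω y ∂μ) ≠ 0) (hwBt : (∫⁻ y in B, ω y ∂μ) ≠ ∞)
    {S : Set α} (hSB : S ⊆ B)
    {G : α → ℝ≥0∞} (hG : Measurable G) :
    ∫⁻ y in S, G y ∂μ ≤ (∫⁻ y in S, (G y)^p * ω y ∂μ) ^ (1/p) *
      ((C+1)^(1/p) * ν * ((∫⁻ y in B, ω y ∂μ)⁻¹)^(1/p)) := by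
  have hp0 : p ≠ 0 := by positivity
  have hp0' : (0:ℝ) < p := by linarith
  have hpq : p.HolderConjugate (p/(p-1)) := Real.HolderConjugate.conjExponent hp1
  set q : ℝ := p/(p-1) with hq
  set wB : ℝ≥0∞ := ∫⁻ y in B, ω y ∂μ with hwB
  set f1 : α → ℝ≥0∞ := fun y => ((G y)^p * ω y)^(1/p) with hf1
  set f2 : α → ℝ≥0∞ := fun y => ((ω y)⁻¹)^(1/p) with hf2
  have hf1m : Measurable f1 := ((hG.pow_const p).mul hωm).pow_const _
  have hf2m : Measurable f2 := (hωm.inv).pow_const _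
  have step0 : ∫⁻ y in S, G y ∂μ = ∫⁻ y in S, (f1 * f2) y ∂μ := by
    refine lintegral_congr_ae ?_
    filter_upwards [ae_restrict_of_ae hωpos] with y hy
    have hω0 : ω y ≠ 0 := hy.1.ne'
    have hωt : ω y ≠ ∞ := hy.2.ne
    show G y = f1 y * f2 y
    rw [hf1, hf2]
    simp only []
    rw [ENNReal.mul_rpow_of_nonneg _ _ (by positivity : (0:ℝ) ≤ 1/p),
      mul_assoc, ← ENNReal.mul_rpow_of_nonneg _ _ (by positivity : (0:ℝ) ≤ 1/p),
      ENNReal.mul_inv_cancel hω0 hωt, ENNReal.one_rpow, mul_one,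
      one_div, ENNReal.rpow_rpow_inv hp0]
  have step1 : ∫⁻ y in S, (f1 * f2) y ∂μ ≤
      (∫⁻ y in S, f1 y ^ p ∂μ) ^ (1/p) * (∫⁻ y in S, f2 y ^ q ∂μ) ^ (1/q) :=
    ENNReal.lintegral_mul_le_Lp_mul_Lq _ hpq hf1m.aemeasurable hf2m.aemeasurable
  have step2 : ∫⁻ y in S, f1 y ^ p ∂μ = ∫⁻ y in S, (G y)^p * ω y ∂μ := by
    refine lintegral_congr fun y => ?_
    rw [hf1]; simp only []
    rw [one_div, ENNReal.rpow_inv_rpow hp0]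
  have hqp : (1/p) * q = 1/(p-1) := by
    rw [hq]; field_simp
  have step3 : ∀ y, f2 y ^ q = ω y ^ (-(1/(p-1))) := by
    intro y
    rw [hf2]; simp only []
    rw [← ENNReal.rpow_mul, hqp, ← ENNReal.rpow_neg_one (ω y), ← ENNReal.rpow_mul]
    congr 1; ring
  have step4 : ∫⁻ y in S, f2 y ^ q ∂μ ≤ ∫⁻ y in B, ω y ^ (-(1/(p-1))) ∂μ := by
    calc ∫⁻ y in S, f2 y ^ q ∂μ = ∫⁻ y in S, ω y ^ (-(1/(p-1))) ∂μ :=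
          lintegral_congr fun y => step3 y
      _ ≤ _ := lintegral_mono_set hSB
  set X : ℝ≥0∞ := ∫⁻ y in B, ω y ^ (-(1/(p-1))) ∂μ with hX
  have hνp0 : ν ^ p ≠ 0 := by
    simp [ENNReal.rpow_eq_zero_iff, hν0, hνt]
  have hνpt : ν ^ p ≠ ∞ := by
    simp [ENNReal.rpow_eq_top_iff, hν0, hνt]
  have step5 : X ^ (p-1) ≤ (C+1) * ν^p * wB⁻¹ := by
    have h1 : X ^ (p-1) = (ν ^ (-p) * wB * X ^ (p-1)) * (ν ^ p * wB⁻¹) := by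
      rw [ENNReal.rpow_neg]
      calc X ^ (p-1) = ((ν^p)⁻¹ * (ν^p)) * (wB * wB⁻¹) * X ^ (p-1) := by
            rw [ENNReal.inv_mul_cancel hνp0 hνpt, ENNReal.mul_inv_cancel hwB0 hwBt,
              one_mul, one_mul]
        _ = (ν ^ p)⁻¹ * wB * X ^ (p-1) * (ν ^ p * wB⁻¹) := by ring
    calc X ^ (p-1) = (ν ^ (-p) * wB * X ^ (p-1)) * (ν ^ p * wB⁻¹) := h1
      _ ≤ (C+1) * (ν ^ p * wB⁻¹) := mul_le_mul_left (le_trans hAq le_self_add) _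
      _ = (C+1) * ν^p * wB⁻¹ := by ring
  have step6 : (∫⁻ y in S, f2 y ^ q ∂μ) ^ (1/q) ≤ (C+1)^(1/p) * ν * (wB⁻¹)^(1/p) := by
    have hq1 : 1/q = (p-1) * (1/p) := by
      rw [hq]; field_simp
    calc (∫⁻ y in S, f2 y ^ q ∂μ) ^ (1/q) ≤ X ^ (1/q) :=
          ENNReal.rpow_le_rpow step4 (by rw [hq1]; exact mul_nonneg (by linarith) (by positivity))
      _ = (X ^ (p-1)) ^ (1/p) := by rw [hq1, ENNReal.rpow_mul]
      _ ≤ ((C+1) * ν^p * wB⁻¹) ^ (1/p) :=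
          ENNReal.rpow_le_rpow step5 (by positivity)
      _ = (C+1)^(1/p) * ν * (wB⁻¹)^(1/p) := by
          rw [ENNReal.mul_rpow_of_nonneg _ _ (by positivity : (0:ℝ) ≤ 1/p),
            ENNReal.mul_rpow_of_nonneg _ _ (by positivity : (0:ℝ) ≤ 1/p),
            one_div, ENNReal.rpow_rpow_inv hp0]
  calc ∫⁻ y in S, G y ∂μ = ∫⁻ y in S, (f1 * f2) y ∂μ := step0
    _ ≤ (∫⁻ y in S, f1 y ^ p ∂μ) ^ (1/p) * (∫⁻ y in S, f2 y ^ q ∂μ) ^ (1/q) := step1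
    _ ≤ (∫⁻ y in S, (G y)^p * ω y ∂μ) ^ (1/p) * ((C+1)^(1/p) * ν * (wB⁻¹)^(1/p)) := by
        rw [step2]; exact mul_le_mul_right step6 _


lemma rpow_ne_zero' {x : ℝ≥0∞} {q : ℝ} (hx0 : x ≠ 0) (hxt : x ≠ ∞) : x ^ q ≠ 0 := by
  simp [ENNReal.rpow_eq_zero_iff, hx0, hxt]

lemma rpow_ne_top' {x : ℝ≥0∞} {q : ℝ} (hx0 : x ≠ 0) (hxt : x ≠ ∞) : x ^ q ≠ ∞ := by
  simp [ENNReal.rpow_eq_top_iff, hx0, hxt]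

lemma div_cancel_mul {c x k : ℝ≥0∞} (hc0 : c ≠ 0) (hct : c ≠ ∞) :
    c * (x / (c * k)) = x / k := by
  rw [div_eq_mul_inv, div_eq_mul_inv, ENNReal.mul_inv (Or.inl hc0) (Or.inl hct)]
  calc c * (x * (c⁻¹ * k⁻¹)) = (c * c⁻¹) * (x * k⁻¹) := by ring
    _ = x * k⁻¹ := by rw [ENNReal.mul_inv_cancel hc0 hct, one_mul]

lemma mul_div_self' {c x : ℝ≥0∞} (hc0 : c ≠ 0) (hct : c ≠ ∞) : c * (x / c) = x := by
  rw [div_eq_mul_inv]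
  calc c * (x * c⁻¹) = (c * c⁻¹) * x := by ring
    _ = x := by rw [ENNReal.mul_inv_cancel hc0 hct, one_mul]

lemma two_div_trick {bL k x : ℝ≥0∞} (hbL0 : bL ≠ 0) (hbLt : bL ≠ ∞) :
    2 * ((bL / (2*k)) * x) / bL = x / k := by
  rw [div_eq_mul_inv bL, ENNReal.mul_inv (Or.inl two_ne_zero) (Or.inl ENNReal.ofNat_ne_top),
    div_eq_mul_inv, div_eq_mul_inv]
  calc 2 * (bL * (2⁻¹ * k⁻¹) * x) * bL⁻¹ = (2 * 2⁻¹) * (bL * bL⁻¹) * (x * k⁻¹) := by ring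
    _ = x * k⁻¹ := by
        rw [ENNReal.mul_inv_cancel two_ne_zero ENNReal.ofNat_ne_top,
          ENNReal.mul_inv_cancel hbL0 hbLt, one_mul, one_mul]

/-- The `ψ = φ^(1/p)` cross inequality from `(aInc)_p`. -/
lemma crossPsi {φx : ℝ≥0∞ → ℝ≥0∞} {a : ℝ≥0} {p : ℝ} (hp1 : 1 < p) (ha1 : 1 ≤ a)
    (hinc : ∀ s t : ℝ≥0, 0 < s → s < t →
      φx s / (s:ℝ≥0∞)^p ≤ (a:ℝ≥0∞) * (φx t / (t:ℝ≥0∞)^p)) :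
    ∀ u v : ℝ≥0∞, 0 < u → u ≤ v → v ≠ ∞ →
      (φx u)^(1/p) * v ≤ (a:ℝ≥0∞)^(1/p) * u * (φx v)^(1/p) := by
  have hp0' : (0:ℝ) < p := lt_trans one_pos hp1
  have hp0 : p ≠ 0 := ne_of_gt hp0'
  have h1p0 : (0:ℝ) < 1/p := by positivity
  intro u v hu huv hv
  rcases eq_or_lt_of_le huv with rfl | hlt
  · calc (φx u)^(1/p) * u = 1 * u * (φx u)^(1/p) := by ring
      _ ≤ (a:ℝ≥0∞)^(1/p) * u * (φx u)^(1/p) := by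
          gcongr
          exact ENNReal.one_le_rpow (by exact_mod_cast ha1) h1p0
  · have hut : u ≠ ∞ := (hlt.trans (lt_top_iff_ne_top.2 hv)).ne
    have hcu : (u.toNNReal : ℝ≥0∞) = u := ENNReal.coe_toNNReal hut
    have hcv : (v.toNNReal : ℝ≥0∞) = v := ENNReal.coe_toNNReal hv
    have huN0 : 0 < u.toNNReal := ENNReal.toNNReal_pos hu.ne' hut
    have hlt' : u.toNNReal < v.toNNReal := by
      rw [← ENNReal.coe_lt_coe, hcu, hcv]; exact hlt
    have hkey := hinc u.toNNReal v.toNNReal huN0 hlt'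
    rw [hcu, hcv] at hkey
    have hup0 : u^p ≠ 0 := rpow_ne_zero' hu.ne' hut
    have hupt : u^p ≠ ∞ := rpow_ne_top' hu.ne' hut
    have hv0 : v ≠ 0 := (lt_of_le_of_lt zero_le hlt).ne'
    have hvp0 : v^p ≠ 0 := rpow_ne_zero' hv0 hv
    have hvpt : v^p ≠ ∞ := rpow_ne_top' hv0 hv
    have h2 : φx u * v^p ≤ (a:ℝ≥0∞) * u^p * φx v := cross hkey hup0 hupt hvp0 hvpt
    have h3 := ENNReal.rpow_le_rpow h2 (le_of_lt h1p0)
    calc (φx u)^(1/p) * v = (φx u * v^p)^(1/p) := by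
          rw [ENNReal.mul_rpow_of_nonneg _ _ (le_of_lt h1p0), one_div,
            ENNReal.rpow_rpow_inv hp0]
      _ ≤ ((a:ℝ≥0∞) * u^p * φx v)^(1/p) := h3
      _ = (a:ℝ≥0∞)^(1/p) * u * (φx v)^(1/p) := by
          rw [ENNReal.mul_rpow_of_nonneg _ _ (le_of_lt h1p0),
            ENNReal.mul_rpow_of_nonneg _ _ (le_of_lt h1p0), one_div,
            ENNReal.rpow_rpow_inv hp0]


/-- Pointwise bounds from `(A0)` and `(aInc)_p`. -/
lemma gammaBound {φy : ℝ≥0∞ → ℝ≥0∞} {a β₀ : ℝ≥0} {p : ℝ} (hp1 : 1 < p) (ha1 : 1 ≤ a)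
    (hb0 : 0 < β₀)
    (hinc : ∀ s t : ℝ≥0, 0 < s → s < t →
      φy s / (s:ℝ≥0∞)^p ≤ (a:ℝ≥0∞) * (φy t / (t:ℝ≥0∞)^p))
    (hA0 : 1 ≤ φy ((β₀:ℝ≥0∞)⁻¹)) (t : ℝ≥0) :
    (1 ≤ φy t → (β₀:ℝ≥0∞) * t ≤ (a:ℝ≥0∞)^(1/p) * (φy t)^(1/p)) ∧
      (φy t ≤ 1 → (β₀:ℝ≥0∞) * t ≤ (a:ℝ≥0∞)^(1/p)) := by
  have hp0' : (0:ℝ) < p := lt_trans one_pos hp1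
  have hp0 : p ≠ 0 := ne_of_gt hp0'
  have h1p0 : (0:ℝ) < 1/p := by positivity
  have hB00 : (β₀:ℝ≥0∞) ≠ 0 := by exact_mod_cast hb0.ne'
  have hB0t : (β₀:ℝ≥0∞) ≠ ∞ := ENNReal.coe_ne_top
  have hAψ1 : (1:ℝ≥0∞) ≤ (a:ℝ≥0∞)^(1/p) := ENNReal.one_le_rpow (by exact_mod_cast ha1) h1p0
  have hcore : β₀⁻¹ < t → ((β₀:ℝ≥0∞) * t)^p ≤ (a:ℝ≥0∞) * φy t := by
    intro hlt
    have ht0 : (t:ℝ≥0∞) ≠ 0 := by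
      have : (0:ℝ≥0) < t := lt_trans (by positivity) hlt
      exact_mod_cast this.ne'
    have hkey := hinc β₀⁻¹ t (by positivity) hlt
    have hco : ((β₀⁻¹ : ℝ≥0) : ℝ≥0∞) = (β₀:ℝ≥0∞)⁻¹ := ENNReal.coe_inv hb0.ne'
    rw [hco] at hkey
    have hc0 : ((β₀:ℝ≥0∞)⁻¹)^p ≠ 0 :=
      rpow_ne_zero' (ENNReal.inv_ne_zero.mpr hB0t) (ENNReal.inv_ne_top.mpr hB00)
    have hct : ((β₀:ℝ≥0∞)⁻¹)^p ≠ ∞ :=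
      rpow_ne_top' (ENNReal.inv_ne_zero.mpr hB0t) (ENNReal.inv_ne_top.mpr hB00)
    have hd0 : ((t:ℝ≥0∞))^p ≠ 0 := rpow_ne_zero' ht0 ENNReal.coe_ne_top
    have hdt : ((t:ℝ≥0∞))^p ≠ ∞ := rpow_ne_top' ht0 ENNReal.coe_ne_top
    have h2 : φy ((β₀:ℝ≥0∞)⁻¹) * ((t:ℝ≥0∞))^p ≤ (a:ℝ≥0∞) * ((β₀:ℝ≥0∞)⁻¹)^p * φy t :=
      cross hkey hc0 hct hd0 hdt
    have h3 : ((t:ℝ≥0∞))^p ≤ (a:ℝ≥0∞) * ((β₀:ℝ≥0∞)⁻¹)^p * φy t :=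
      le_trans (by nth_rewrite 1 [← one_mul (((t:ℝ≥0∞))^p)]; exact mul_le_mul_left hA0 _) h2
    calc ((β₀:ℝ≥0∞) * t)^p = (β₀:ℝ≥0∞)^p * ((t:ℝ≥0∞))^p :=
          ENNReal.mul_rpow_of_nonneg _ _ (le_of_lt hp0')
      _ ≤ (β₀:ℝ≥0∞)^p * ((a:ℝ≥0∞) * ((β₀:ℝ≥0∞)⁻¹)^p * φy t) := mul_le_mul_right h3 _
      _ = ((β₀:ℝ≥0∞) * (β₀:ℝ≥0∞)⁻¹)^p * ((a:ℝ≥0∞) * φy t) := by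
          rw [ENNReal.mul_rpow_of_nonneg _ _ (le_of_lt hp0')]; ring
      _ = (a:ℝ≥0∞) * φy t := by
          rw [ENNReal.mul_inv_cancel hB00 hB0t, ENNReal.one_rpow, one_mul]
  have hsmall : t ≤ β₀⁻¹ → (β₀:ℝ≥0∞) * t ≤ 1 := by
    intro hle
    have : (β₀:ℝ≥0∞) * t ≤ (β₀:ℝ≥0∞) * (β₀:ℝ≥0∞)⁻¹ := by
      refine mul_le_mul_right ?_ _
      rw [← ENNReal.coe_inv hb0.ne']
      exact_mod_cast hle
    rwa [ENNReal.mul_inv_cancel hB00 hB0t] at this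
  constructor
  · intro hΦ1
    rcases le_or_gt t β₀⁻¹ with hc | hc
    · calc (β₀:ℝ≥0∞) * t ≤ 1 := hsmall hc
        _ = 1 * 1 := (mul_one 1).symm
        _ ≤ (a:ℝ≥0∞)^(1/p) * (φy t)^(1/p) :=
            mul_le_mul' hAψ1 (ENNReal.one_le_rpow hΦ1 h1p0)
    · have := hcore hc
      calc (β₀:ℝ≥0∞) * t = (((β₀:ℝ≥0∞) * t)^p)^(1/p) := by
            rw [one_div, ENNReal.rpow_rpow_inv hp0]
        _ ≤ ((a:ℝ≥0∞) * φy t)^(1/p) := ENNReal.rpow_le_rpow this (le_of_lt h1p0)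
        _ = (a:ℝ≥0∞)^(1/p) * (φy t)^(1/p) := ENNReal.mul_rpow_of_nonneg _ _ (le_of_lt h1p0)
  · intro hΦ1
    rcases le_or_gt t β₀⁻¹ with hc | hc
    · exact le_trans (hsmall hc) hAψ1
    · have h1 := hcore hc
      have h2 : ((β₀:ℝ≥0∞) * t)^p ≤ (a:ℝ≥0∞) := le_trans h1 (by
        calc (a:ℝ≥0∞) * φy t ≤ (a:ℝ≥0∞) * 1 := mul_le_mul_right hΦ1 _
          _ = (a:ℝ≥0∞) := mul_one _)
      calc (β₀:ℝ≥0∞) * t = (((β₀:ℝ≥0∞) * t)^p)^(1/p) := by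
            rw [one_div, ENNReal.rpow_rpow_inv hp0]
        _ ≤ ((a:ℝ≥0∞))^(1/p) := ENNReal.rpow_le_rpow h2 (le_of_lt h1p0)

end WKE

set_option maxHeartbeats 2000000 in
/-- The weighted key estimate. -/
theorem weighted_key_estimate
    (n : ℕ) (Ω : Set (Rn n)) (hΩ : IsOpen Ω)
    (φ : Rn n → ℝ≥0∞ → ℝ≥0∞) (ω : Rn n → ℝ≥0∞) (p : ℝ) (hp1 : 1 < p)
    (hφ : IsWeakPhi Ω φ) (hA0 : A0 Ω φ) (hA1 : A1w Ω ω φ) (hA2 : A2w Ω ω φ)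
    (hInc : AInc Ω φ p) (hω : MuckenhouptAq p ω) :
    ∃ β : ℝ≥0, 0 < β ∧ ∃ h : Rn n → ℝ≥0, MemL1wLinf Ω ω h ∧
      ∀ f : Rn n → ℝ, Measurable f →
        wModular Ω ω φ (fun x => (‖f x‖₊ : ℝ≥0∞)) ≤ 1 →
          ∀ (z : Rn n) (r : ℝ), 0 < r →
            ∀ᵐ x ∂(volume : Measure (Rn n)), x ∈ ball z r ∩ Ω →
              (φ x ((β : ℝ≥0∞) * (volume (ball z r))⁻¹ *
                  ∫⁻ y in ball z r ∩ Ω, (‖f y‖₊ : ℝ≥0∞))) ^ (1 / p) ≤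
                (volume (ball z r))⁻¹ *
                    (∫⁻ y in ball z r ∩ Ω, (φ y (‖f y‖₊ : ℝ≥0∞)) ^ (1 / p)) +
                  (h x : ℝ≥0∞) ^ (1 / p) +
                  (volume (ball z r))⁻¹ *
                    ∫⁻ y in ball z r ∩ Ω, (h y : ℝ≥0∞) ^ (1 / p) := by
  classical
  obtain ⟨⟨hωm, hωpos, hωloc⟩, C, hCt, hAqC⟩ := hω
  obtain ⟨a, ha1, haInc⟩ := hInc
  obtain ⟨β₀, hb0, hb01, hA0ae⟩ := hA0
  obtain ⟨β₁, hb1, hb11, hA1p⟩ := hA1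
  obtain ⟨β₂, hb2, hb21, h, hhmem, hA2p⟩ := hA2 1 one_pos
  obtain ⟨hhm, hhint, Ch, hhbd⟩ := hhmem
  have hp0' : (0:ℝ) < p := lt_trans one_pos hp1
  have hp0 : p ≠ 0 := ne_of_gt hp0'
  have h1p0 : (0:ℝ) < 1/p := by positivity
  have h1p1 : (1:ℝ)/p ≤ 1 := by rw [div_le_one hp0']; linarith
  -- basic constants
  set Aψ : ℝ≥0∞ := (a : ℝ≥0∞) ^ (1/p) with hAψdef
  have hAψ1 : 1 ≤ Aψ := ENNReal.one_le_rpow (by exact_mod_cast ha1) h1p0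
  have hAψt : Aψ ≠ ∞ := WKE.rpow_ne_top' (by simpa using (lt_of_lt_of_le one_pos ha1).ne') ENNReal.coe_ne_top
  have hAψ0 : Aψ ≠ 0 := (lt_of_lt_of_le zero_lt_one hAψ1).ne'
  set B0 : ℝ≥0∞ := (β₀ : ℝ≥0∞) with hB0def
  have hB00 : B0 ≠ 0 := by simp [hB0def]; exact hb0.ne'
  have hB0t : B0 ≠ ∞ := ENNReal.coe_ne_top
  set cp : ℝ≥0∞ := (C + 1) ^ (1/p) with hcpdef
  have hCp10 : C + 1 ≠ 0 := by simp
  have hCp1t : C + 1 ≠ ∞ := by simp [hCt]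
  have hcp1 : 1 ≤ cp := ENNReal.one_le_rpow le_add_self h1p0
  have hcpt : cp ≠ ∞ := WKE.rpow_ne_top' hCp10 hCp1t
  have hcp0 : cp ≠ 0 := (lt_of_lt_of_le zero_lt_one hcp1).ne'
  set C6 : ℝ≥0∞ := 1 + (Ch : ℝ≥0∞) ^ (1/p) with hC6def
  have hC60 : C6 ≠ 0 := by simp [hC6def]
  have hC6t : C6 ≠ ∞ := by
    simp only [hC6def]
    refine ENNReal.add_ne_top.mpr ⟨ENNReal.one_ne_top, ?_⟩
    exact ENNReal.rpow_ne_top_of_nonneg (le_of_lt h1p0) ENNReal.coe_ne_top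
  set βL : ℝ≥0∞ := ((min β₁ β₂ : ℝ≥0) : ℝ≥0∞) with hβLdef
  have hβL0 : βL ≠ 0 := by
    simp only [hβLdef, ne_eq, ENNReal.coe_eq_zero]
    exact (lt_min hb1 hb2).ne'
  have hβLt : βL ≠ ∞ := ENNReal.coe_ne_top
  have hβLle1 : βL ≤ (β₁ : ℝ≥0∞) := by
    simp only [hβLdef]; exact_mod_cast min_le_left _ _
  have hβLle2 : βL ≤ (β₂ : ℝ≥0∞) := by
    simp only [hβLdef]; exact_mod_cast min_le_right _ _
  have hdiv0 : ∀ (u v : ℝ≥0∞), u ≠ 0 → v ≠ ∞ → u / v ≠ 0 :=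
    fun u v hu hv => (ENNReal.div_pos hu hv).ne'
  have hdivt : ∀ (u v : ℝ≥0∞), u ≠ ∞ → v ≠ 0 → u / v ≠ ∞ := by
    intro u v hu hv
    simp [ENNReal.div_eq_top, hu, hv]
  set βE : ℝ≥0∞ := min (B0*B0/(Aψ*Aψ)) (min (B0*B0/(Aψ*cp)) (min (βL/(2*(2*2)))
      (min (βL/(2*(2*2*(Aψ*cp)))) (min (βL/(2*(2*Aψ)))
      (min (B0*B0/(Aψ*C6)) ((β₂:ℝ≥0∞)/(2*(Aψ*Aψ)))))))) with hβEdef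
  have hβE1 : βE ≤ B0*B0/(Aψ*Aψ) := min_le_left _ _
  have hβE2 : βE ≤ B0*B0/(Aψ*cp) := le_trans (min_le_right _ _) (min_le_left _ _)
  have hβE3 : βE ≤ βL/(2*(2*2)) :=
    le_trans (min_le_right _ _) (le_trans (min_le_right _ _) (min_le_left _ _))
  have hβE4 : βE ≤ βL/(2*(2*2*(Aψ*cp))) :=
    le_trans (min_le_right _ _) (le_trans (min_le_right _ _)
      (le_trans (min_le_right _ _) (min_le_left _ _)))
  have hβE5 : βE ≤ βL/(2*(2*Aψ)) :=
    le_trans (min_le_right _ _) (le_trans (min_le_right _ _)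
      (le_trans (min_le_right _ _) (le_trans (min_le_right _ _) (min_le_left _ _))))
  have hβE6 : βE ≤ B0*B0/(Aψ*C6) :=
    le_trans (min_le_right _ _) (le_trans (min_le_right _ _)
      (le_trans (min_le_right _ _) (le_trans (min_le_right _ _)
        (le_trans (min_le_right _ _) (min_le_left _ _)))))
  have hβE7 : βE ≤ (β₂:ℝ≥0∞)/(2*(Aψ*Aψ)) :=
    le_trans (min_le_right _ _) (le_trans (min_le_right _ _)
      (le_trans (min_le_right _ _) (le_trans (min_le_right _ _)
        (le_trans (min_le_right _ _) (min_le_right _ _)))))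
  have hfin8 : (2*(2*2) : ℝ≥0∞) ≠ ∞ := by finiteness
  have hfin4A : (2*(2*2*(Aψ*cp)) : ℝ≥0∞) ≠ ∞ := by finiteness
  have hfin2A : (2*(2*Aψ) : ℝ≥0∞) ≠ ∞ := by finiteness
  have hfinAA : (2*(Aψ*Aψ) : ℝ≥0∞) ≠ ∞ := by finiteness
  have hβE0 : βE ≠ 0 := by
    have h1 := ENNReal.div_pos (mul_ne_zero hB00 hB00) (ENNReal.mul_ne_top hAψt hAψt)
    have h2 := ENNReal.div_pos (mul_ne_zero hB00 hB00) (ENNReal.mul_ne_top hAψt hcpt)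
    have h3 := ENNReal.div_pos hβL0 hfin8
    have h4 := ENNReal.div_pos hβL0 hfin4A
    have h5 := ENNReal.div_pos hβL0 hfin2A
    have h6 := ENNReal.div_pos (mul_ne_zero hB00 hB00) (ENNReal.mul_ne_top hAψt hC6t)
    have h7 := ENNReal.div_pos (by exact_mod_cast hb2.ne' : (β₂:ℝ≥0∞) ≠ 0) hfinAA
    exact (lt_min h1 (lt_min h2 (lt_min h3 (lt_min h4 (lt_min h5 (lt_min h6 h7)))))).ne' 
  have hβEt : βE ≠ ∞ := by
    intro htop
    have := hβE2
    rw [htop] at this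
    exact absurd (eq_top_iff.mpr this)
      (hdivt _ _ (ENNReal.mul_ne_top hB0t hB0t) (mul_ne_zero hAψ0 hcp0))
  have hβEhalf : βE/2 ≠ ∞ := hdivt _ _ hβEt two_ne_zero
  refine ⟨(βE/2).toNNReal, ENNReal.toNNReal_pos (hdiv0 _ _ hβE0 ENNReal.ofNat_ne_top) hβEhalf,
    fun y => (2:ℝ≥0)^p * h y, ⟨hhm.const_mul _, ?_, ⟨(2:ℝ≥0)^p * Ch, ?_⟩⟩, ?_⟩
  · -- integrability of the new h
    have heq : (∫⁻ x in Ω, (((2:ℝ≥0)^p * h x : ℝ≥0) : ℝ≥0∞) * ω x)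
        = (((2:ℝ≥0)^p : ℝ≥0) : ℝ≥0∞) * ∫⁻ x in Ω, (h x : ℝ≥0∞) * ω x := by
      rw [← lintegral_const_mul _ (show Measurable fun x => (h x : ℝ≥0∞) * ω x from (hhm.coe_nnreal_ennreal).mul hωm)]
      refine lintegral_congr fun x => ?_
      push_cast; ring
    rw [heq]
    exact ENNReal.mul_ne_top ENNReal.coe_ne_top hhint
  · -- boundedness
    filter_upwards [hhbd] with x hx hxΩ
    exact mul_le_mul_right (hx hxΩ) _
  · -- main estimate
    intro f hf hmod z r hr
    have hmod' : (∫⁻ y in Ω, φ y ((‖f y‖₊ : ℝ≥0∞)) * ω y) ≤ 1 := hmod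
    set ν : ℝ≥0∞ := volume (ball z r) with hνdef
    have hν0 : ν ≠ 0 := (measure_ball_pos _ _ hr).ne'
    have hνt : ν ≠ ∞ := measure_ball_lt_top.ne
    set Dm : Set (Rn n) := ball z r ∩ Ω with hDmdef
    have hDmm : MeasurableSet Dm := measurableSet_ball.inter hΩ.measurableSet
    have hDmball : Dm ⊆ ball z r := Set.inter_subset_left
    set Fn : Rn n → ℝ≥0∞ := fun y => ((‖f y‖₊ : ℝ≥0∞)) with hFndef
    have hFnm : Measurable Fn := hf.nnnorm.coe_nnreal_ennreal
    set Φf : Rn n → ℝ≥0∞ := fun y => φ y (Fn y) with hΦfdef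
    have hΦfm : Measurable Φf := hφ.meas Fn hFnm
    set Ψf : Rn n → ℝ≥0∞ := fun y => (Φf y) ^ (1/p) with hΨfdef
    have hΨfm : Measurable Ψf := hΦfm.pow_const _
    have hΨfpow : ∀ y, Ψf y ^ p = Φf y := by
      intro y
      rw [hΨfdef]; simp only []
      rw [one_div, ENNReal.rpow_inv_rpow hp0]
    set wB : ℝ≥0∞ := wSet ω (ball z r) with hwBdef
    have hwBt : wB ≠ ∞ := hωloc z r hr
    have hwB0 : wB ≠ 0 := by
      intro h0
      have h1 : ∀ᵐ y ∂(volume.restrict (ball z r)), ω y = 0 :=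
        (lintegral_eq_zero_iff hωm).mp h0
      have h2 : ∀ᵐ y ∂(volume.restrict (ball z r)), 0 < ω y ∧ ω y < ∞ :=
        ae_restrict_of_ae hωpos
      have h3 : ∀ᵐ _y ∂(volume.restrict (ball z r)), False := by
        filter_upwards [h1, h2] with y hy1 hy2
        exact absurd hy1 hy2.1.ne'
      have h4 : volume.restrict (ball z r) = 0 :=
        Measure.measure_univ_eq_zero.mp (by simpa using h3)
      rw [Measure.restrict_eq_zero] at h4
      exact hν0 h4
    set W : ℝ≥0∞ := (wB⁻¹) ^ (1/p) with hWdef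
    have hW0 : W ≠ 0 :=
      WKE.rpow_ne_zero' (ENNReal.inv_ne_zero.mpr hwBt) (ENNReal.inv_ne_top.mpr hwB0)
    have hWt : W ≠ ∞ :=
      WKE.rpow_ne_top' (ENNReal.inv_ne_zero.mpr hwBt) (ENNReal.inv_ne_top.mpr hwB0)
    -- the sets E1, E2
    set E1 : Set (Rn n) := Dm ∩ {y | 1 < Φf y} with hE1def
    set E2 : Set (Rn n) := Dm ∩ {y | Φf y ≤ 1} with hE2def
    have hE1m : MeasurableSet E1 := hDmm.inter (measurableSet_lt measurable_const hΦfm)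
    have hE2m : MeasurableSet E2 := hDmm.inter (measurableSet_le hΦfm measurable_const)
    have hE1Ω : E1 ⊆ Ω := fun y hy => hy.1.2
    have hE2Ω : E2 ⊆ Ω := fun y hy => hy.1.2
    have hE1ball : E1 ⊆ ball z r := fun y hy => hy.1.1
    have hE2ball : E2 ⊆ ball z r := fun y hy => hy.1.1
    have hDmsplit : Dm = E1 ∪ E2 := by
      ext y
      simp only [hE1def, hE2def, Set.mem_union, Set.mem_inter_iff, Set.mem_setOf_eq]
      constructor
      · intro hy
        rcases le_or_gt (Φf y) 1 with hc | hc
        · exact Or.inr ⟨hy, hc⟩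
        · exact Or.inl ⟨hy, hc⟩
      · rintro (⟨hy, _⟩ | ⟨hy, _⟩) <;> exact hy
    have hdisj : Disjoint E1 E2 := by
      rw [Set.disjoint_left]
      rintro y ⟨_, hy1⟩ ⟨_, hy2⟩
      simp only [Set.mem_setOf_eq] at hy1 hy2
      exact absurd hy2 (not_le.mpr hy1)
    have hFsplit : (∫⁻ y in Dm, Fn y) = (∫⁻ y in E1, Fn y) + ∫⁻ y in E2, Fn y := by
      rw [hDmsplit, lintegral_union hE2m hdisj]
    have hΨsplit : (∫⁻ y in Dm, Ψf y) = (∫⁻ y in E1, Ψf y) + ∫⁻ y in E2, Ψf y := by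
      rw [hDmsplit, lintegral_union hE2m hdisj]
    set I1 : ℝ≥0∞ := ν⁻¹ * ∫⁻ y in E1, Fn y with hI1def
    set I2 : ℝ≥0∞ := ν⁻¹ * ∫⁻ y in E2, Fn y with hI2def
    set K1 : ℝ≥0∞ := ν⁻¹ * ∫⁻ y in E1, Ψf y with hK1def
    set K2 : ℝ≥0∞ := ν⁻¹ * ∫⁻ y in E2, Ψf y with hK2def
    -- a.e. y facts
    have hΦft : ∀ᵐ y ∂(volume : Measure (Rn n)), y ∈ Ω → Φf y ≠ ∞ := by
      have h1 : ∀ᵐ y ∂(volume.restrict Ω), Φf y * ω y < ∞ :=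
        ae_lt_top (hΦfm.mul hωm) (ne_top_of_le_ne_top ENNReal.one_ne_top hmod')
      have h2 := (ae_restrict_iff' hΩ.measurableSet).mp h1
      filter_upwards [h2, hωpos] with y hy1 hy2 hyΩ hΦtop
      have h3 := hy1 hyΩ
      rw [hΦtop, ENNReal.top_mul hy2.1.ne'] at h3
      exact absurd h3 (lt_irrefl _)
    have hγpt : ∀ᵐ y ∂(volume : Measure (Rn n)), y ∈ Ω →
        ((1 ≤ Φf y → B0 * Fn y ≤ Aψ * Ψf y) ∧ (Φf y ≤ 1 → B0 * Fn y ≤ Aψ)) := by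
      filter_upwards [haInc, hA0ae] with y hyInc hyA0 hyΩ
      have hg := WKE.gammaBound hp1 ha1 hb0 (hyInc hyΩ) ((hyA0 hyΩ).2) (‖f y‖₊)
      exact ⟨fun h1 => hg.1 h1, fun h1 => hg.2 h1⟩
    -- the weighted modular bound on E1
    have hmodE1 : (∫⁻ y in E1, Ψf y ^ p * ω y) ≤ 1 := by
      calc ∫⁻ y in E1, Ψf y ^ p * ω y = ∫⁻ y in E1, Φf y * ω y :=
            lintegral_congr fun y => by rw [hΨfpow]
        _ ≤ ∫⁻ y in Ω, Φf y * ω y := lintegral_mono_set hE1Ω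
        _ ≤ 1 := hmod'
    -- A_p Hölder bounds
    have hK1cap : (∫⁻ y in E1, Ψf y) ≤ cp * ν * W := by
      have hH := WKE.holder volume hωm hωpos hp1 (hAqC z r hr) hν0 hνt hwB0 hwBt hE1ball hΨfm
      calc (∫⁻ y in E1, Ψf y) ≤ (∫⁻ y in E1, Ψf y ^ p * ω y) ^ (1/p) * (cp * ν * W) := hH
        _ ≤ (1:ℝ≥0∞) ^ (1/p) * (cp * ν * W) :=
            mul_le_mul_left (ENNReal.rpow_le_rpow hmodE1 (le_of_lt h1p0)) _
        _ = cp * ν * W := by rw [ENNReal.one_rpow, one_mul]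
    have hγE1 : ∀ᵐ y ∂(volume.restrict E1), B0 * Fn y ≤ Aψ * Ψf y := by
      filter_upwards [ae_restrict_of_ae hγpt, ae_restrict_mem hE1m] with y hy hymem
      exact (hy (hE1Ω hymem)).1 (le_of_lt hymem.2)
    have hI1cap : B0 * (∫⁻ y in E1, Fn y) ≤ Aψ * (cp * ν * W) := by
      have hH := WKE.holder volume hωm hωpos hp1 (hAqC z r hr) hν0 hνt hwB0 hwBt hE1ball
        (hFnm.const_mul B0)
      have hpt : (∫⁻ y in E1, (B0 * Fn y) ^ p * ω y) ≤ (a:ℝ≥0∞) := by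
        calc (∫⁻ y in E1, (B0 * Fn y) ^ p * ω y)
            ≤ ∫⁻ y in E1, (a:ℝ≥0∞) * (Φf y * ω y) := by
              refine lintegral_mono_ae ?_
              filter_upwards [hγE1] with y hy
              have h2 : (B0 * Fn y) ^ p ≤ (Aψ * Ψf y) ^ p :=
                ENNReal.rpow_le_rpow hy (le_of_lt hp0')
              have h3 : (Aψ * Ψf y) ^ p = (a:ℝ≥0∞) * Φf y := by
                rw [ENNReal.mul_rpow_of_nonneg _ _ (le_of_lt hp0'), hΨfpow, hAψdef,
                  one_div, ENNReal.rpow_inv_rpow hp0]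
              rw [← mul_assoc]
              exact mul_le_mul_left (by rw [← h3]; exact h2) _
          _ = (a:ℝ≥0∞) * ∫⁻ y in E1, Φf y * ω y :=
              lintegral_const_mul _ (hΦfm.mul hωm)
          _ ≤ (a:ℝ≥0∞) * 1 := mul_le_mul_right
              (le_trans (lintegral_mono_set hE1Ω) hmod') _
          _ = (a:ℝ≥0∞) := mul_one _
      calc B0 * (∫⁻ y in E1, Fn y) = ∫⁻ y in E1, B0 * Fn y :=
            (lintegral_const_mul _ hFnm).symm
        _ ≤ (∫⁻ y in E1, (B0 * Fn y) ^ p * ω y) ^ (1/p) * (cp * ν * W) := hH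
        _ ≤ ((a:ℝ≥0∞)) ^ (1/p) * (cp * ν * W) :=
            mul_le_mul_left (ENNReal.rpow_le_rpow hpt (le_of_lt h1p0)) _
        _ = Aψ * (cp * ν * W) := by rw [hAψdef]
    -- finiteness of the integrals
    have hFE1t : (∫⁻ y in E1, Fn y) ≠ ∞ := by
      intro htop
      rw [htop, ENNReal.mul_top hB00] at hI1cap
      exact absurd (eq_top_iff.mpr hI1cap)
        (ENNReal.mul_ne_top hAψt (ENNReal.mul_ne_top (ENNReal.mul_ne_top hcpt hνt) hWt))
    have hI1t : I1 ≠ ∞ := ENNReal.mul_ne_top (ENNReal.inv_ne_top.mpr hν0) hFE1t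
    have hγK : B0 * I1 ≤ Aψ * K1 := by
      rw [hI1def, hK1def, ← mul_assoc, ← mul_assoc, mul_comm B0 ν⁻¹, mul_comm Aψ ν⁻¹,
        mul_assoc, mul_assoc]
      refine mul_le_mul_right ?_ _
      rw [← lintegral_const_mul _ hFnm, ← lintegral_const_mul _ hΨfm]
      exact lintegral_mono_ae hγE1
    have hI1W : B0 * I1 ≤ Aψ * (cp * W) := by
      have h1 : B0 * I1 = ν⁻¹ * (B0 * ∫⁻ y in E1, Fn y) := by
        rw [hI1def]; ring
      rw [h1]
      calc ν⁻¹ * (B0 * ∫⁻ y in E1, Fn y) ≤ ν⁻¹ * (Aψ * (cp * ν * W)) :=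
            mul_le_mul_right hI1cap _
        _ = (ν⁻¹ * ν) * (Aψ * (cp * W)) := by ring
        _ = Aψ * (cp * W) := by rw [ENNReal.inv_mul_cancel hν0 hνt, one_mul]
    -- the parts
    have part1 : ∀ᵐ x ∂(volume : Measure (Rn n)), x ∈ Dm →
        (φ x (βE * I1)) ^ (1/p) ≤ K1 + (h x : ℝ≥0∞)^(1/p) := by
      rcases eq_or_ne I1 0 with hI10 | hI10
      · filter_upwards [hφ.map_zero] with x hx0 hxDm
        rw [hI10, mul_zero, hx0 hxDm.2, ENNReal.zero_rpow_of_pos h1p0]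
        exact zero_le
      by_cases hcaseA : βE * I1 ≤ B0
      · -- Case A : small average
        filter_upwards [hφ.mono, haInc, hA0ae] with x hxmono hxInc hxA0 hxDm
        have hxΩ : x ∈ Ω := hxDm.2
        have hcross := WKE.crossPsi hp1 ha1 (hxInc hxΩ)
        have hu0 : 0 < βE * I1 := ENNReal.mul_pos hβE0 hI10
        have h1 : (φ x (βE*I1))^(1/p) * B0 ≤ Aψ * (βE*I1) * (φ x B0)^(1/p) :=
          hcross _ _ hu0 hcaseA hB0t
        have hψB0 : (φ x B0)^(1/p) ≤ 1 := by
          calc (φ x B0)^(1/p) ≤ (1:ℝ≥0∞)^(1/p) :=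
                ENNReal.rpow_le_rpow ((hxA0 hxΩ).1) (le_of_lt h1p0)
            _ = 1 := ENNReal.one_rpow _
        have h2 : (φ x (βE*I1))^(1/p) * B0 ≤ Aψ * (βE*I1) := by
          calc (φ x (βE*I1))^(1/p) * B0 ≤ Aψ * (βE*I1) * (φ x B0)^(1/p) := h1
            _ ≤ Aψ * (βE*I1) * 1 := mul_le_mul_right hψB0 _
            _ = Aψ * (βE*I1) := mul_one _
        have h3 : Aψ * (βE * I1) ≤ B0 * K1 := by
          calc Aψ * (βE * I1) = (Aψ * βE) * I1 := by ring
            _ ≤ (Aψ * (B0*B0/(Aψ*Aψ))) * I1 :=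
                mul_le_mul_left (mul_le_mul_right hβE1 _) _
            _ = (B0*B0/Aψ) * I1 := by rw [WKE.div_cancel_mul hAψ0 hAψt]
            _ = (B0/Aψ) * (B0 * I1) := by
                rw [div_eq_mul_inv, div_eq_mul_inv]; ring
            _ ≤ (B0/Aψ) * (Aψ * K1) := mul_le_mul_right hγK _
            _ = ((B0/Aψ) * Aψ) * K1 := by ring
            _ = B0 * K1 := by rw [ENNReal.div_mul_cancel hAψ0 hAψt]
        have h4 : (φ x (βE*I1))^(1/p) * B0 ≤ K1 * B0 :=
          le_trans h2 (le_trans h3 (le_of_eq (mul_comm _ _)))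
        exact le_trans ((ENNReal.mul_le_mul_iff_left hB00 hB0t).mp h4) le_self_add
      · -- Case B : large average
        have hcaseB : B0 < βE * I1 := not_le.mp hcaseA
        have hwB1 : wB ≤ 1 := by
          by_contra hgt
          push_neg at hgt
          have hWle : W ≤ 1 := by
            rw [hWdef]
            exact ENNReal.rpow_le_one (ENNReal.inv_le_one.mpr hgt.le) (le_of_lt h1p0)
          have h1 : B0 * (βE * I1) ≤ B0 * B0 := by
            calc B0 * (βE * I1) = βE * (B0 * I1) := by ring
              _ ≤ βE * (Aψ * (cp * W)) := mul_le_mul_right hI1W _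
              _ ≤ βE * (Aψ * (cp * 1)) :=
                  mul_le_mul_right (mul_le_mul_right (mul_le_mul_right hWle _) _) _
              _ = βE * (Aψ * cp) := by rw [mul_one]
              _ ≤ (B0*B0/(Aψ*cp)) * (Aψ*cp) := mul_le_mul_left hβE2 _
              _ = B0 * B0 := ENNReal.div_mul_cancel (mul_ne_zero hAψ0 hcp0)
                  (ENNReal.mul_ne_top hAψt hcpt)
          exact absurd ((ENNReal.mul_le_mul_iff_right hB00 hB0t).mp h1) (not_le.mpr hcaseB)
        set t2 : ℝ≥0∞ := 2 * (βE * I1) / βL with ht2def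
        have ht20 : t2 ≠ 0 := by
          rw [ht2def]
          exact (ENNReal.div_pos
            (mul_ne_zero two_ne_zero (ENNReal.mul_pos hβE0 hI10).ne') hβLt).ne'
        have ht2t : t2 ≠ ∞ := by
          rw [ht2def]
          exact hdivt _ _
            (ENNReal.mul_ne_top ENNReal.ofNat_ne_top (ENNReal.mul_ne_top hβEt hI1t)) hβL0
        have ht2coe : ((t2.toNNReal : ℝ≥0) : ℝ≥0∞) = t2 := ENNReal.coe_toNNReal ht2t
        have hβLt2 : βL * t2 = 2 * (βE * I1) := by
          rw [ht2def]
          exact WKE.mul_div_self' hβL0 hβLt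
        have hargt2 : βE * I1 ≤ βL * t2 := by
          rw [hβLt2, two_mul]; exact le_self_add
        have ht2cap : ∀ {k : ℝ≥0∞}, βE ≤ βL/(2*k) → t2 ≤ I1/k := by
          intro k hk
          rw [ht2def]
          calc 2 * (βE * I1)/βL ≤ 2 * ((βL/(2*k)) * I1)/βL := by
                exact ENNReal.div_le_div_right
                  (mul_le_mul_right (mul_le_mul_left hk _) _) _
            _ = I1 / k := WKE.two_div_trick hβL0 hβLt
        set Ehi : Set (Rn n) := E1 ∩ {y | t2 < Fn y} with hEhidef
        have hEhim : MeasurableSet Ehi := hE1m.inter (measurableSet_lt measurable_const hFnm)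
        have hlomass : (∫⁻ y in E1 \ Ehi, Fn y) ≤ ν * (I1/(2*2)) := by
          have hpt : ∀ y ∈ E1 \ Ehi, Fn y ≤ t2 := by
            intro y hy
            by_contra hgt2
            exact hy.2 ⟨hy.1, lt_of_not_ge hgt2⟩
          calc (∫⁻ y in E1 \ Ehi, Fn y) ≤ ∫⁻ _y in E1 \ Ehi, t2 :=
                setLIntegral_mono' (hE1m.diff hEhim) hpt
            _ = t2 * volume (E1 \ Ehi) := setLIntegral_const _ _
            _ ≤ t2 * ν := mul_le_mul_right
                (measure_mono (fun y hy => hE1ball hy.1)) _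
            _ ≤ (I1/(2*2)) * ν := mul_le_mul_left (ht2cap hβE3) _
            _ = ν * (I1/(2*2)) := mul_comm _ _
        have hE1eq : ν * I1 = ∫⁻ y in E1, Fn y := by
          rw [hI1def, ← mul_assoc, ENNReal.mul_inv_cancel hν0 hνt, one_mul]
        have hK1eq : ν * K1 = ∫⁻ y in E1, Ψf y := by
          rw [hK1def, ← mul_assoc, ENNReal.mul_inv_cancel hν0 hνt, one_mul]
        have hhimass : ν * I1 ≤ ν * (I1/(2*2)) + ∫⁻ y in Ehi, Fn y := by
          have hsplit2 : (∫⁻ y in E1, Fn y)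
              = (∫⁻ y in E1 \ Ehi, Fn y) + ∫⁻ y in Ehi, Fn y := by
            rw [← lintegral_union hEhim disjoint_sdiff_left,
              Set.diff_union_of_subset Set.inter_subset_left]
          rw [hE1eq, hsplit2]
          exact add_le_add_left hlomass _
        set Glo : Set (Rn n) := Ehi ∩ {y | φ y t2 < 1} with hGlodef
        set Gmid : Set (Rn n) := Ehi ∩ {y | 1 ≤ φ y t2 ∧ φ y t2 ≤ wB⁻¹} with hGmiddef
        set Ghi : Set (Rn n) := Ehi ∩ {y | wB⁻¹ < φ y t2} with hGhidef
        have hφt2m : Measurable (fun y => φ y t2) := hφ.meas (fun _ => t2) measurable_const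
        have hGlom : MeasurableSet Glo := hEhim.inter (measurableSet_lt hφt2m measurable_const)
        have hGhim : MeasurableSet Ghi := hEhim.inter (measurableSet_lt measurable_const hφt2m)
        have hGmidm : MeasurableSet Gmid := by
          have e : Gmid = Ehi ∩ ({y | 1 ≤ φ y t2} ∩ {y | φ y t2 ≤ wB⁻¹}) := rfl
          rw [e]
          refine hEhim.inter (MeasurableSet.inter ?_ ?_)
          · exact measurableSet_le measurable_const hφt2m
          · exact measurableSet_le hφt2m measurable_const
        have hGhipt : ∀ᵐ y ∂(volume.restrict Ghi), Fn y ≤ Aψ * t2 * W⁻¹ * Ψf y := by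
          filter_upwards [ae_restrict_of_ae haInc, ae_restrict_mem hGhim] with y hyInc hymem
          have hyΩ : y ∈ Ω := hE1Ω hymem.1.1
          have ht2lt : t2 < Fn y := hymem.1.2
          have hwlt : wB⁻¹ < φ y t2 := hymem.2
          have hltN : t2.toNNReal < ‖f y‖₊ := by
            rw [← ENNReal.coe_lt_coe, ht2coe]; exact ht2lt
          have hkey := hyInc hyΩ t2.toNNReal (‖f y‖₊) (ENNReal.toNNReal_pos ht20 ht2t) hltN
          rw [ht2coe] at hkey
          have hFn0 : Fn y ≠ 0 := (lt_of_le_of_lt zero_le ht2lt).ne'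
          have hcross2 : φ y t2 * (Fn y)^p ≤ (a:ℝ≥0∞) * t2^p * Φf y :=
            WKE.cross hkey (WKE.rpow_ne_zero' ht20 ht2t) (WKE.rpow_ne_top' ht20 ht2t)
              (WKE.rpow_ne_zero' hFn0 ENNReal.coe_ne_top)
              (WKE.rpow_ne_top' hFn0 ENNReal.coe_ne_top)
          have h1 : wB⁻¹ * (Fn y)^p ≤ (a:ℝ≥0∞) * t2^p * Φf y :=
            le_trans (mul_le_mul_left hwlt.le _) hcross2
          have h2 : (Fn y)^p ≤ (a:ℝ≥0∞) * t2^p * Φf y * wB := by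
            calc (Fn y)^p = (wB⁻¹ * (Fn y)^p) * wB := by
                  rw [mul_comm wB⁻¹ _, mul_assoc, ENNReal.inv_mul_cancel hwB0 hwBt, mul_one]
              _ ≤ ((a:ℝ≥0∞) * t2^p * Φf y) * wB := mul_le_mul_left h1 _
          have h3 := ENNReal.rpow_le_rpow h2 (le_of_lt h1p0)
          have hLHS : ((Fn y)^p)^(1/p) = Fn y := by
            rw [one_div, ENNReal.rpow_rpow_inv hp0]
          have hRHS : ((a:ℝ≥0∞) * t2^p * Φf y * wB)^(1/p) = Aψ * t2 * W⁻¹ * Ψf y := by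
            rw [ENNReal.mul_rpow_of_nonneg _ _ (le_of_lt h1p0),
              ENNReal.mul_rpow_of_nonneg _ _ (le_of_lt h1p0),
              ENNReal.mul_rpow_of_nonneg _ _ (le_of_lt h1p0)]
            have e1 : (t2^p)^(1/p) = t2 := by rw [one_div, ENNReal.rpow_rpow_inv hp0]
            have e2 : wB^(1/p) = W⁻¹ := by
              rw [hWdef, ENNReal.inv_rpow, inv_inv]
            rw [e1, e2, hΨfdef, hAψdef]
            ring
          rw [hLHS, hRHS] at h3
          exact h3
        have hGhimass : (∫⁻ y in Ghi, Fn y) ≤ ν * (I1/(2*2)) := by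
          calc (∫⁻ y in Ghi, Fn y) ≤ ∫⁻ y in Ghi, Aψ * t2 * W⁻¹ * Ψf y :=
                lintegral_mono_ae hGhipt
            _ = Aψ * t2 * W⁻¹ * ∫⁻ y in Ghi, Ψf y := lintegral_const_mul _ hΨfm
            _ ≤ Aψ * t2 * W⁻¹ * ∫⁻ y in E1, Ψf y :=
                mul_le_mul_right (lintegral_mono_set (fun y hy => hy.1.1)) _
            _ ≤ Aψ * t2 * W⁻¹ * (cp * ν * W) := mul_le_mul_right hK1cap _
            _ = (Aψ*cp) * t2 * ν * (W⁻¹ * W) := by ring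
            _ = (Aψ*cp) * t2 * ν := by
                rw [ENNReal.inv_mul_cancel hW0 hWt, mul_one]
            _ ≤ (Aψ*cp) * (I1/((Aψ*cp)*(2*2))) * ν := by
                refine mul_le_mul_left (mul_le_mul_right (le_trans (ht2cap hβE4) ?_) _) _
                rw [show (2*2*(Aψ*cp) : ℝ≥0∞) = (Aψ*cp)*(2*2) by ring]
            _ = (I1/(2*2)) * ν := by
                rw [WKE.div_cancel_mul (mul_ne_zero hAψ0 hcp0) (ENNReal.mul_ne_top hAψt hcpt)]
            _ = ν * (I1/(2*2)) := mul_comm _ _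
        have htri : Ehi ⊆ Glo ∪ (Gmid ∪ Ghi) := by
          intro y hy
          rcases lt_or_ge (φ y t2) 1 with hc | hc
          · exact Or.inl ⟨hy, hc⟩
          rcases le_or_gt (φ y t2) wB⁻¹ with hc2 | hc2
          · exact Or.inr (Or.inl ⟨hy, hc, hc2⟩)
          · exact Or.inr (Or.inr ⟨hy, hc2⟩)
        by_cases hGlo0 : volume Glo = 0
        · -- a-route : transfer through A1
          have hGmidmass : ν * (I1/2) ≤ ∫⁻ y in Gmid, Fn y := by
            have hsub : (∫⁻ y in Ehi, Fn y) ≤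
                (∫⁻ y in Glo, Fn y) + ((∫⁻ y in Gmid, Fn y) + ∫⁻ y in Ghi, Fn y) := by
              calc (∫⁻ y in Ehi, Fn y) ≤ ∫⁻ y in Glo ∪ (Gmid ∪ Ghi), Fn y :=
                    lintegral_mono_set htri
                _ ≤ _ := le_trans (lintegral_union_le _ _ _)
                    (add_le_add_right (lintegral_union_le _ _ _) _)
            have hGlo0' : (∫⁻ y in Glo, Fn y) = 0 := by
              rw [setLIntegral_measure_zero _ _ hGlo0]
            rw [hGlo0', zero_add] at hsub
            have h1 : ν * I1 ≤ (∫⁻ y in Gmid, Fn y) + (ν*(I1/(2*2)) + ν*(I1/(2*2))) := by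
              calc ν * I1 ≤ ν*(I1/(2*2)) + ∫⁻ y in Ehi, Fn y := hhimass
                _ ≤ ν*(I1/(2*2)) + ((∫⁻ y in Gmid, Fn y) + ∫⁻ y in Ghi, Fn y) :=
                    add_le_add_right hsub _
                _ ≤ ν*(I1/(2*2)) + ((∫⁻ y in Gmid, Fn y) + ν*(I1/(2*2))) :=
                    add_le_add_right (add_le_add_right hGhimass _) _
                _ = (∫⁻ y in Gmid, Fn y) + (ν*(I1/(2*2)) + ν*(I1/(2*2))) := by ring
            have h2 : ν*(I1/(2*2)) + ν*(I1/(2*2)) = ν * (I1/2) := by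
              rw [← mul_add]
              congr 1
              have e : I1/(2*2) = (I1/2)/2 := by
                rw [div_eq_mul_inv, div_eq_mul_inv, div_eq_mul_inv,
                  ENNReal.mul_inv (Or.inl two_ne_zero) (Or.inl ENNReal.ofNat_ne_top)]
                ring
              rw [e, ENNReal.add_halves]
            have h3 : ν * I1 = ν*(I1/2) + ν*(I1/2) := by
              rw [← mul_add, ENNReal.add_halves]
            rw [h2, h3] at h1
            exact (ENNReal.add_le_add_iff_right
              (ENNReal.mul_ne_top hνt (hdivt _ _ hI1t two_ne_zero))).mp h1
          have hν2I0 : ν*(I1/2) ≠ 0 :=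
            mul_ne_zero hν0 (ENNReal.div_pos hI10 ENNReal.ofNat_ne_top).ne'
          have hν2It : ν*(I1/2) ≠ ∞ :=
            ENNReal.mul_ne_top hνt (hdivt _ _ hI1t two_ne_zero)
          have hAψt2 : Aψ * t2 ≤ I1/2 := by
            calc Aψ * t2 ≤ Aψ * (I1/(Aψ*2)) := by
                  refine mul_le_mul_right (le_trans (ht2cap hβE5) ?_) _
                  rw [show (2*Aψ : ℝ≥0∞) = Aψ*2 by ring]
              _ = I1/2 := WKE.div_cancel_mul hAψ0 hAψt
          have hA1x := hA1p z r hr hwB1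
          filter_upwards [hφ.mono, haInc, hA1x] with x hxmono hxInc hxA1 hxDm
          have hxΩ : x ∈ Ω := hxDm.2
          have hmono' : Monotone (φ x) := hxmono hxΩ
          have hGmidpt : ∀ᵐ y ∂(volume.restrict Gmid),
              Fn y * (φ x (βE * I1))^(1/p) ≤ Aψ * t2 * Ψf y := by
            filter_upwards [ae_restrict_of_ae hxA1, ae_restrict_of_ae haInc,
              ae_restrict_mem hGmidm] with y hyA1 hyInc hymem
            have hyE1 : y ∈ E1 := hymem.1.1
            have hyΩ : y ∈ Ω := hE1Ω hyE1
            have hyball : y ∈ ball z r := hE1ball hyE1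
            have h1le : 1 ≤ φ y t2 := hymem.2.1
            have hlew : φ y t2 ≤ wB⁻¹ := hymem.2.2
            have ht2lt : t2 < Fn y := hymem.1.2
            have hA1y := hyA1 ⟨hxDm.1, hxΩ⟩ ⟨hyball, hyΩ⟩ t2.toNNReal
              (by rw [ht2coe]; exact h1le) (by rw [ht2coe]; exact hlew)
            rw [ht2coe] at hA1y
            have hxle : φ x (βE * I1) ≤ φ y t2 := by
              refine le_trans (hmono' ?_) hA1y
              calc βE * I1 ≤ βL * t2 := hargt2
                _ ≤ (β₁:ℝ≥0∞) * t2 := mul_le_mul_left hβLle1 _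
            have hltN : t2.toNNReal < ‖f y‖₊ := by
              rw [← ENNReal.coe_lt_coe, ht2coe]; exact ht2lt
            have hkey := hyInc hyΩ t2.toNNReal (‖f y‖₊)
              (ENNReal.toNNReal_pos ht20 ht2t) hltN
            rw [ht2coe] at hkey
            have hFn0 : Fn y ≠ 0 := (lt_of_le_of_lt zero_le ht2lt).ne'
            have hcross2 : φ y t2 * (Fn y)^p ≤ (a:ℝ≥0∞) * t2^p * Φf y :=
              WKE.cross hkey (WKE.rpow_ne_zero' ht20 ht2t) (WKE.rpow_ne_top' ht20 ht2t)
                (WKE.rpow_ne_zero' hFn0 ENNReal.coe_ne_top)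
                (WKE.rpow_ne_top' hFn0 ENNReal.coe_ne_top)
            have h2 : φ x (βE*I1) * (Fn y)^p ≤ (a:ℝ≥0∞) * t2^p * Φf y :=
              le_trans (mul_le_mul_left hxle _) hcross2
            have h3 := ENNReal.rpow_le_rpow h2 (le_of_lt h1p0)
            have hL : (φ x (βE*I1) * (Fn y)^p)^(1/p)
                = (φ x (βE*I1))^(1/p) * Fn y := by
              rw [ENNReal.mul_rpow_of_nonneg _ _ (le_of_lt h1p0), one_div,
                ENNReal.rpow_rpow_inv hp0]
            have hR : ((a:ℝ≥0∞) * t2^p * Φf y)^(1/p) = Aψ * t2 * Ψf y := by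
              rw [ENNReal.mul_rpow_of_nonneg _ _ (le_of_lt h1p0),
                ENNReal.mul_rpow_of_nonneg _ _ (le_of_lt h1p0)]
              have e1 : (t2^p)^(1/p) = t2 := by rw [one_div, ENNReal.rpow_rpow_inv hp0]
              rw [e1, hΨfdef, hAψdef]
            rw [hL, hR] at h3
            rw [mul_comm (Fn y) _]
            exact h3
          have hint : (∫⁻ y in Gmid, Fn y) * (φ x (βE * I1))^(1/p)
              ≤ Aψ * t2 * ∫⁻ y in E1, Ψf y := by
            calc (∫⁻ y in Gmid, Fn y) * (φ x (βE*I1))^(1/p)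
                = ∫⁻ y in Gmid, Fn y * (φ x (βE*I1))^(1/p) :=
                  (lintegral_mul_const _ hFnm).symm
              _ ≤ ∫⁻ y in Gmid, Aψ * t2 * Ψf y := lintegral_mono_ae hGmidpt
              _ = Aψ * t2 * ∫⁻ y in Gmid, Ψf y := lintegral_const_mul _ hΨfm
              _ ≤ Aψ * t2 * ∫⁻ y in E1, Ψf y :=
                  mul_le_mul_right (lintegral_mono_set (fun y hy => hy.1.1)) _
          have hfin2 : (ν*(I1/2)) * (φ x (βE*I1))^(1/p) ≤ (ν*(I1/2)) * K1 := by
            calc (ν*(I1/2)) * (φ x (βE*I1))^(1/p)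
                ≤ (∫⁻ y in Gmid, Fn y) * (φ x (βE*I1))^(1/p) :=
                  mul_le_mul_left hGmidmass _
              _ ≤ Aψ * t2 * ∫⁻ y in E1, Ψf y := hint
              _ = Aψ * t2 * (ν * K1) := by rw [hK1eq]
              _ ≤ (I1/2) * (ν * K1) := mul_le_mul_left hAψt2 _
              _ = (ν*(I1/2)) * K1 := by ring
          exact le_trans ((ENNReal.mul_le_mul_iff_right hν2I0 hν2It).mp hfin2) le_self_add
        · -- c-route : transfer through A2
          filter_upwards [hφ.mono, hA2p] with x hxmono hxA2 hxDm
          have hxΩ : x ∈ Ω := hxDm.2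
          have hmono' : Monotone (φ x) := hxmono hxΩ
          have hPae : ∀ᵐ y ∂(volume : Measure (Rn n)),
              ((x ∈ Ω → y ∈ Ω → ∀ t : ℝ≥0, φ y t ≤ 1 →
                φ x ((β₂:ℝ≥0∞) * t) ≤ φ y t + (h x:ℝ≥0∞) + (h y:ℝ≥0∞))
              ∧ (y ∈ Ω → h y ≤ Ch)) := hxA2.and hhbd
          obtain ⟨y, hyP, hyGlo⟩ : ∃ y,
              ((x ∈ Ω → y ∈ Ω → ∀ t : ℝ≥0, φ y t ≤ 1 →
                φ x ((β₂:ℝ≥0∞) * t) ≤ φ y t + (h x:ℝ≥0∞) + (h y:ℝ≥0∞))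
              ∧ (y ∈ Ω → h y ≤ Ch)) ∧ y ∈ Glo := by
            by_contra hno
            push_neg at hno
            refine hGlo0 (measure_mono_null ?_ (ae_iff.mp hPae))
            intro y hy
            simp only [Set.mem_setOf_eq]
            intro hP
            exact hno y hP hy
          have hyEhi : y ∈ Ehi := hyGlo.1
          have hyΩ : y ∈ Ω := hE1Ω hyEhi.1
          have hylt : φ y t2 < 1 := hyGlo.2
          have hA2y := hyP.1 hxΩ hyΩ t2.toNNReal (by rw [ht2coe]; exact hylt.le)
          rw [ht2coe] at hA2y
          have hxle : φ x (βE * I1) ≤ 1 + (h x:ℝ≥0∞) + (Ch:ℝ≥0∞) := by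
            refine le_trans (hmono' ?_) (le_trans hA2y ?_)
            · calc βE * I1 ≤ βL * t2 := hargt2
                _ ≤ (β₂:ℝ≥0∞) * t2 := mul_le_mul_left hβLle2 _
            · refine add_le_add (add_le_add hylt.le le_rfl) ?_
              exact_mod_cast hyP.2 hyΩ
          have hψle : (φ x (βE*I1))^(1/p)
              ≤ 1 + (Ch:ℝ≥0∞)^(1/p) + (h x:ℝ≥0∞)^(1/p) := by
            refine le_trans (ENNReal.rpow_le_rpow hxle (le_of_lt h1p0)) ?_
            refine le_trans (WKE.rpow3 hp1 _ _ _) ?_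
            rw [ENNReal.one_rpow]
            ring_nf
            exact le_rfl
          have hC6K1 : C6 ≤ K1 := by
            have h1 : B0 * ((Aψ*C6) * B0) ≤ B0 * ((Aψ*C6) * (βE * I1)) :=
              mul_le_mul_right (mul_le_mul_right hcaseB.le _) _
            have h2 : (Aψ*C6) * (βE * I1) ≤ B0 * (B0 * I1) := by
              calc (Aψ*C6) * (βE * I1) = ((Aψ*C6) * βE) * I1 := by ring
                _ ≤ ((Aψ*C6) * (B0*B0/(Aψ*C6))) * I1 :=
                    mul_le_mul_left (mul_le_mul_right hβE6 _) _
                _ = (B0*B0) * I1 := by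
                    rw [WKE.mul_div_self' (mul_ne_zero hAψ0 hC60)
                      (ENNReal.mul_ne_top hAψt hC6t)]
                _ = B0 * (B0 * I1) := by ring
            have h3 : B0 * ((Aψ*C6) * B0) ≤ B0 * (B0 * (Aψ * K1)) :=
              le_trans h1 (mul_le_mul_right (le_trans h2 (mul_le_mul_right hγK _)) _)
            have h4 : (Aψ*C6) * B0 ≤ B0 * (Aψ * K1) :=
              (ENNReal.mul_le_mul_iff_right hB00 hB0t).mp h3
            have h5 : Aψ * (C6 * B0) ≤ Aψ * (K1 * B0) := by
              calc Aψ * (C6 * B0) = (Aψ*C6) * B0 := by ring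
                _ ≤ B0 * (Aψ * K1) := h4
                _ = Aψ * (K1 * B0) := by ring
            exact (ENNReal.mul_le_mul_iff_left hB00 hB0t).mp
              ((ENNReal.mul_le_mul_iff_right hAψ0 hAψt).mp h5)
          calc (φ x (βE*I1))^(1/p) ≤ 1 + (Ch:ℝ≥0∞)^(1/p) + (h x:ℝ≥0∞)^(1/p) := hψle
            _ = C6 + (h x:ℝ≥0∞)^(1/p) := by rw [hC6def]
            _ ≤ K1 + (h x:ℝ≥0∞)^(1/p) := add_le_add_left hC6K1 _
    have part2 : ∀ᵐ x ∂(volume : Measure (Rn n)), x ∈ Dm →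
        (φ x (βE * I2)) ^ (1/p) ≤ K2 + (h x : ℝ≥0∞)^(1/p) +
          ν⁻¹ * ∫⁻ y in Dm, (h y : ℝ≥0∞)^(1/p) := by
      have hγE2 : ∀ᵐ y ∂(volume.restrict E2), B0 * Fn y ≤ Aψ := by
        filter_upwards [ae_restrict_of_ae hγpt, ae_restrict_mem hE2m] with y hy hymem
        exact (hy (hE2Ω hymem)).2 hymem.2
      have hvolE2 : volume E2 ≤ ν := measure_mono hE2ball
      have hFE2t : (∫⁻ y in E2, Fn y) ≠ ∞ := by
        have h1 : B0 * ∫⁻ y in E2, Fn y ≤ Aψ * ν := by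
          rw [← lintegral_const_mul _ hFnm]
          calc ∫⁻ y in E2, B0 * Fn y ≤ ∫⁻ _y in E2, Aψ := lintegral_mono_ae hγE2
            _ = Aψ * volume E2 := by rw [setLIntegral_const]
            _ ≤ Aψ * ν := mul_le_mul_right hvolE2 _
        intro htop
        rw [htop, ENNReal.mul_top hB00] at h1
        exact absurd (eq_top_iff.mpr h1) (ENNReal.mul_ne_top hAψt hνt)
      have hI2t : I2 ≠ ∞ := ENNReal.mul_ne_top (ENNReal.inv_ne_top.mpr hν0) hFE2t
      rcases eq_or_ne I2 0 with hI20 | hI20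
      · filter_upwards [hφ.map_zero] with x hx0 hxDm
        rw [hI20, mul_zero, hx0 hxDm.2, ENNReal.zero_rpow_of_pos h1p0]
        exact zero_le
      filter_upwards [hφ.mono, hφ.map_zero, haInc, hA2p] with x hxmono hx0 hxInc hxA2 hxDm
      have hxΩ : x ∈ Ω := hxDm.2
      have hmono' : Monotone (φ x) := hxmono hxΩ
      have hψxm : Measurable (fun t : ℝ≥0∞ => (φ x t) ^ (1/p)) :=
        (hmono'.measurable).pow_const _
      have hcross := WKE.crossPsi hp1 ha1 (hxInc hxΩ)
      set g : Rn n → ℝ≥0∞ := fun y => (β₂ : ℝ≥0∞) * Fn y with hgdef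
      have hgm : Measurable g := hFnm.const_mul _
      have hgf : ∀ y, g y < ∞ :=
        fun y => ENNReal.mul_lt_top ENNReal.coe_lt_top ENNReal.coe_lt_top
      have hIg : ν⁻¹ * (∫⁻ y in E2, g y) = (β₂:ℝ≥0∞) * I2 := by
        rw [hgdef]
        simp only []
        rw [lintegral_const_mul _ hFnm, hI2def]
        ring
      have hIgt : ν⁻¹ * (∫⁻ y in E2, g y) ≠ ∞ := by
        rw [hIg]
        exact ENNReal.mul_ne_top ENNReal.coe_ne_top hI2t
      have hψx0 : (φ x (0:ℝ≥0∞)) ^ (1/p) = 0 := by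
        rw [hx0 hxΩ]
        exact ENNReal.zero_rpow_of_pos h1p0
      have hjen := WKE.jensen volume hE2m hν0 hνt hvolE2 hgm hgf
        (ψ := fun t : ℝ≥0∞ => (φ x t) ^ (1/p)) (A := Aψ) hcross hψxm hψx0 hIgt
      rw [hIg] at hjen
      -- pointwise A2 bound under the integral
      have hA2pt : ∀ᵐ y ∂(volume.restrict E2),
          (φ x (g y))^(1/p) ≤ Ψf y + (h x:ℝ≥0∞)^(1/p) + (h y:ℝ≥0∞)^(1/p) := by
        filter_upwards [ae_restrict_of_ae hxA2, ae_restrict_mem hE2m] with y hy hymem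
        have hyΩ : y ∈ Ω := hE2Ω hymem
        have hΦle : Φf y ≤ 1 := hymem.2
        have h1 := hy hxΩ hyΩ (‖f y‖₊) hΦle
        have h2 : (φ x (g y))^(1/p) ≤ (Φf y + (h x:ℝ≥0∞) + (h y:ℝ≥0∞)) ^ (1/p) :=
          ENNReal.rpow_le_rpow h1 (le_of_lt h1p0)
        exact le_trans h2 (WKE.rpow3 hp1 _ _ _)
      have hintbd : ν⁻¹ * (∫⁻ y in E2, (φ x (g y))^(1/p)) ≤
          K2 + (h x:ℝ≥0∞)^(1/p) + ν⁻¹ * ∫⁻ y in Dm, (h y:ℝ≥0∞)^(1/p) := by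
        calc ν⁻¹ * (∫⁻ y in E2, (φ x (g y))^(1/p))
            ≤ ν⁻¹ * (∫⁻ y in E2, (Ψf y + (h x:ℝ≥0∞)^(1/p) + (h y:ℝ≥0∞)^(1/p))) :=
              mul_le_mul_right (lintegral_mono_ae hA2pt) _
          _ = ν⁻¹ * ((∫⁻ y in E2, Ψf y) + (h x:ℝ≥0∞)^(1/p) * volume E2
              + ∫⁻ y in E2, (h y:ℝ≥0∞)^(1/p)) := by
              rw [lintegral_add_right _ (hhm.coe_nnreal_ennreal.pow_const _),
                lintegral_add_right _ measurable_const, setLIntegral_const]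
          _ = K2 + ν⁻¹ * ((h x:ℝ≥0∞)^(1/p) * volume E2)
              + ν⁻¹ * ∫⁻ y in E2, (h y:ℝ≥0∞)^(1/p) := by
              rw [mul_add, mul_add, hK2def]
          _ ≤ K2 + (h x:ℝ≥0∞)^(1/p) + ν⁻¹ * ∫⁻ y in Dm, (h y:ℝ≥0∞)^(1/p) := by
              refine add_le_add (add_le_add le_rfl ?_) ?_
              · calc ν⁻¹ * ((h x:ℝ≥0∞)^(1/p) * volume E2)
                    ≤ ν⁻¹ * ((h x:ℝ≥0∞)^(1/p) * ν) := by
                      exact mul_le_mul_right (mul_le_mul_right hvolE2 _) _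
                  _ = (h x:ℝ≥0∞)^(1/p) * (ν⁻¹ * ν) := by ring
                  _ = (h x:ℝ≥0∞)^(1/p) := by
                      rw [ENNReal.inv_mul_cancel hν0 hνt, mul_one]
              · refine mul_le_mul_right (lintegral_mono_set ?_) _
                rw [hDmsplit]
                exact Set.subset_union_right
      set R : ℝ≥0∞ := K2 + (h x:ℝ≥0∞)^(1/p) + ν⁻¹ * ∫⁻ y in Dm, (h y:ℝ≥0∞)^(1/p)
        with hRdef
      set v : ℝ≥0∞ := (β₂:ℝ≥0∞) * I2 / 2 with hvdef
      have hv0 : v ≠ 0 := by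
        rw [hvdef]
        exact (ENNReal.div_pos (mul_ne_zero (by exact_mod_cast hb2.ne') hI20)
          ENNReal.ofNat_ne_top).ne'
      have hvt : v ≠ ∞ := by
        rw [hvdef]
        exact hdivt _ _ (ENNReal.mul_ne_top ENNReal.coe_ne_top hI2t) two_ne_zero
      have hu0 : 0 < βE * I2 := ENNReal.mul_pos hβE0 hI20
      have hveq : ((β₂:ℝ≥0∞)/2) * I2 = v := by
        rw [hvdef, div_eq_mul_inv, div_eq_mul_inv]; ring
      have hle : βE * I2 ≤ v := by
        rw [← hveq]
        refine mul_le_mul_left (le_trans hβE7 ?_) _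
        refine ENNReal.div_le_div_left ?_ _
        refine le_mul_of_one_le_right' ?_
        calc (1:ℝ≥0∞) = 1 * 1 := (mul_one 1).symm
          _ ≤ Aψ * Aψ := mul_le_mul' hAψ1 hAψ1
      have hAAu : Aψ * Aψ * (βE * I2) ≤ v := by
        rw [← hveq]
        calc Aψ * Aψ * (βE * I2) = (Aψ * Aψ * βE) * I2 := by ring
          _ ≤ (Aψ * Aψ * ((β₂:ℝ≥0∞)/((Aψ*Aψ)*2))) * I2 := by
              refine mul_le_mul_left (mul_le_mul_right (le_trans hβE7 (le_of_eq ?_)) _) _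
              rw [mul_comm (2:ℝ≥0∞) (Aψ*Aψ)]
          _ = ((β₂:ℝ≥0∞)/2) * I2 := by
              rw [WKE.div_cancel_mul (mul_ne_zero hAψ0 hAψ0) (ENNReal.mul_ne_top hAψt hAψt)]
      have hψv : (φ x v)^(1/p) ≤ Aψ * R := le_trans hjen (mul_le_mul_right hintbd _)
      have hfinal : (φ x (βE * I2))^(1/p) * v ≤ R * v := by
        calc (φ x (βE * I2))^(1/p) * v ≤ Aψ * (βE * I2) * (φ x v)^(1/p) :=
            hcross _ _ hu0 hle hvt
          _ ≤ Aψ * (βE * I2) * (Aψ * R) := mul_le_mul_right hψv _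
          _ = (Aψ * Aψ * (βE * I2)) * R := by ring
          _ ≤ v * R := mul_le_mul_left hAAu _
          _ = R * v := mul_comm _ _
      exact (ENNReal.mul_le_mul_iff_left hv0 hvt).mp hfinal
    -- assembly
    have hβcoe : (((βE/2).toNNReal : ℝ≥0) : ℝ≥0∞) = βE/2 := ENNReal.coe_toNNReal hβEhalf
    have hRHSh1 : ∀ x : Rn n, ((((2:ℝ≥0)^p * h x : ℝ≥0)) : ℝ≥0∞)^(1/p)
        = 2 * (h x : ℝ≥0∞)^(1/p) := by
      intro x
      rw [ENNReal.coe_mul, ENNReal.coe_rpow_of_ne_zero two_ne_zero,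
        ENNReal.mul_rpow_of_nonneg _ _ (le_of_lt h1p0), ← ENNReal.rpow_mul,
        mul_one_div_cancel hp0, ENNReal.rpow_one]
      norm_cast
    have hRHSint : (∫⁻ y in Dm, ((((2:ℝ≥0)^p * h y : ℝ≥0)) : ℝ≥0∞)^(1/p))
        = 2 * ∫⁻ y in Dm, (h y : ℝ≥0∞)^(1/p) := by
      rw [← lintegral_const_mul _ (hhm.coe_nnreal_ennreal.pow_const _)]
      exact lintegral_congr fun y => hRHSh1 y
    filter_upwards [part1, part2, hφ.mono] with x hx1 hx2 hxmono hxDm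
    have hmono' : Monotone (φ x) := hxmono hxDm.2
    have hargle : (((βE/2).toNNReal : ℝ≥0) : ℝ≥0∞) * ν⁻¹ * (∫⁻ y in Dm, Fn y)
        ≤ βE * max I1 I2 := by
      rw [hβcoe, mul_assoc]
      have h1 : ν⁻¹ * (∫⁻ y in Dm, Fn y) = I1 + I2 := by
        rw [hFsplit, mul_add, hI1def, hI2def]
      rw [h1]
      calc (βE/2) * (I1 + I2) ≤ (βE/2) * (2 * max I1 I2) := by
            refine mul_le_mul_right ?_ _
            rw [two_mul]
            exact add_le_add (le_max_left _ _) (le_max_right _ _)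
        _ = ((βE/2) * 2) * max I1 I2 := by rw [mul_assoc]
        _ = βE * max I1 I2 := by
            rw [ENNReal.div_mul_cancel two_ne_zero ENNReal.ofNat_ne_top]
    rw [hRHSh1 x, hRHSint]
    have hJ : ν⁻¹ * (∫⁻ y in Dm, Ψf y) = K1 + K2 := by
      rw [hΨsplit, mul_add, hK1def, hK2def]
    rw [hJ]
    rcases le_total I1 I2 with hcmp | hcmp
    · rw [max_eq_right hcmp] at hargle
      calc (φ x ((((βE/2).toNNReal : ℝ≥0) : ℝ≥0∞) * ν⁻¹ * ∫⁻ y in Dm, Fn y)) ^ (1/p)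
          ≤ (φ x (βE * I2)) ^ (1/p) :=
            ENNReal.rpow_le_rpow (hmono' hargle) (le_of_lt h1p0)
        _ ≤ K2 + (h x : ℝ≥0∞)^(1/p) + ν⁻¹ * ∫⁻ y in Dm, (h y : ℝ≥0∞)^(1/p) := hx2 hxDm
        _ ≤ (K1 + K2) + 2 * (h x : ℝ≥0∞)^(1/p)
            + ν⁻¹ * (2 * ∫⁻ y in Dm, (h y : ℝ≥0∞)^(1/p)) := by
            refine add_le_add (add_le_add le_add_self ?_) ?_
            · rw [two_mul]; exact le_add_self
            · rw [← mul_assoc, mul_comm ν⁻¹ 2, mul_assoc]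
              rw [two_mul]; exact le_add_self
    · rw [max_eq_left hcmp] at hargle
      calc (φ x ((((βE/2).toNNReal : ℝ≥0) : ℝ≥0∞) * ν⁻¹ * ∫⁻ y in Dm, Fn y)) ^ (1/p)
          ≤ (φ x (βE * I1)) ^ (1/p) :=
            ENNReal.rpow_le_rpow (hmono' hargle) (le_of_lt h1p0)
        _ ≤ K1 + (h x : ℝ≥0∞)^(1/p) := hx1 hxDm
        _ ≤ (K1 + K2) + 2 * (h x : ℝ≥0∞)^(1/p)
            + ν⁻¹ * (2 * ∫⁻ y in Dm, (h y : ℝ≥0∞)^(1/p)) := by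
            refine le_trans (add_le_add le_self_add ?_) le_self_add
            rw [two_mul]; exact le_add_self
end
end

section
/- Let Ω ⊆ ℝⁿ be open, ω a weight, and φ ∈ Φ_w(Ω). Then φ satisfies (A2)_ω if and only if there exist an x-independent weak Φ-function φ_∞ : [0,∞) → [0,∞], a nonnegative h ∈ L¹(Ω,ω) ∩ L^∞(Ω), and β ∈ (0,1] such that, for a.e. x ∈ Ω: φ(x,βt) ≤ φ_∞(t) + h(x) whenever φ_∞(t) ∈ [0,1], and φ_∞(βt) ≤ φ(x,t) + h(x) whenever φ(x,t) ∈ [0,1]. -/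
open MeasureTheory Metric Filter Set
open scoped ENNReal NNReal Topology

noncomputable section

/-- downscaling via (aInc)_1 -/
lemma downscale {f : ℝ≥0∞ → ℝ≥0∞} {a : ℝ≥0}
    (hinc : ∀ s t : ℝ≥0, 0 < s → s < t →
      f s / (s : ℝ≥0∞) ≤ a * (f t / (t : ℝ≥0∞)))
    {t K : ℝ≥0} (ht : 0 < t) (hK : 1 < K) : f ↑(t / K) ≤ ↑a * f ↑t / ↑K := by
  have hK0 : (0:ℝ≥0) < K := lt_trans zero_lt_one hK
  have h0 : (0:ℝ≥0) < t / K := div_pos ht hK0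
  have hlt : t / K < t := div_lt_self ht hK
  have key := hinc (t / K) t h0 hlt
  rw [ENNReal.div_le_iff (by exact_mod_cast h0.ne') ENNReal.coe_ne_top] at key
  calc f ↑(t / K) ≤ ↑a * (f ↑t / ↑t) * ↑(t / K) := key
    _ = ↑a * ((f ↑t / ↑t) * ↑t / ↑K) := by
        rw [ENNReal.coe_div hK0.ne', mul_assoc, mul_div_assoc]
    _ = ↑a * (f ↑t / ↑K) := by
        rw [ENNReal.div_mul_cancel (by exact_mod_cast ht.ne') ENNReal.coe_ne_top]
    _ = ↑a * f ↑t / ↑K := (mul_div_assoc _ _ _).symm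

/-- the reverse direction of the characterization -/
lemma a2w_of_char {n : ℕ} (Ω : Set (Rn n)) (ω : Rn n → ℝ≥0∞)
    (φ : Rn n → ℝ≥0∞ → ℝ≥0∞) (hφ : IsWeakPhi Ω φ)
    (ψ : ℝ≥0∞ → ℝ≥0∞) (hψ : IsWeakPhi0 ψ) (h : Rn n → ℝ≥0) (hh : MemL1wLinf Ω ω h)
    (β : ℝ≥0) (hβ0 : 0 < β) (hβ1 : β ≤ 1)
    (H : ∀ᵐ x ∂(volume : Measure (Rn n)), x ∈ Ω → ∀ t : ℝ≥0,
      (ψ t ≤ 1 → φ x (β * t) ≤ ψ t + h x) ∧ (φ x t ≤ 1 → ψ (β * t) ≤ φ x t + h x)) :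
    A2w Ω ω φ := by
  intro s hs
  obtain ⟨a, ha1, haof⟩ := hφ.aInc_one
  obtain ⟨hmeas, hint, C, hC⟩ := hh
  obtain ⟨a', ha'1, ha'inc⟩ := hψ.aInc_one
  set K : ℝ≥0 := a * s + 1 with hKdef
  set K₂ : ℝ≥0 := a' * (1 + C) + 1 with hK2def
  have ha0 : (0:ℝ≥0) < a := lt_of_lt_of_le zero_lt_one ha1
  have hK1 : 1 < K := lt_add_of_pos_left 1 (mul_pos ha0 hs)
  have hK21 : 1 < K₂ := lt_add_of_pos_left 1
    (mul_pos (lt_of_lt_of_le zero_lt_one ha'1) (by positivity))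
  have hK0 : (0:ℝ≥0) < K := lt_trans zero_lt_one hK1
  have hK20 : (0:ℝ≥0) < K₂ := lt_trans zero_lt_one hK21
  refine ⟨β * β / (K * K₂), by positivity, ?_, h, ⟨hmeas, hint, C, hC⟩, ?_⟩
  · apply div_le_one_of_le₀
    · calc β * β ≤ 1 * 1 := mul_le_mul' hβ1 hβ1
        _ = 1 := one_mul 1
        _ ≤ K * K₂ := one_le_mul hK1.le hK21.le
    · exact zero_le
  filter_upwards [H, haof, hφ.mono, hφ.map_zero, hC] with x hx hax hmonox hzerox hCx
  filter_upwards [H, haof, hφ.mono, hφ.map_zero, hC] with y hy hay hmonoy hzeroy hCy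
  intro hxΩ hyΩ t hts
  rcases eq_or_lt_of_le (zero_le (a := t)) with ht0 | ht0
  · -- t = 0 : LHS is φ x 0 = 0
    rw [← ht0]
    simp only [ENNReal.coe_zero, mul_zero, hzerox hxΩ]
    exact zero_le
  -- the main case
  have haof' : ∀ s t : ℝ≥0, 0 < s → s < t →
      φ y s / (s : ℝ≥0∞) ≤ a * (φ y t / (t : ℝ≥0∞)) := by
    intro s' t' h1 h2
    have := hay hyΩ s' t' h1 h2
    simpa [ENNReal.rpow_one] using this
  -- step 1 : φ y (t/K) ≤ 1
  have step1 : φ y ↑(t / K) ≤ 1 := by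
    calc φ y ↑(t / K) ≤ ↑a * φ y ↑t / ↑K := downscale haof' ht0 hK1
      _ ≤ ↑a * ↑s / ↑K := by gcongr
      _ ≤ 1 := by
          rw [ENNReal.div_le_iff (by exact_mod_cast hK0.ne') ENNReal.coe_ne_top, one_mul]
          exact_mod_cast (le_add_of_nonneg_right zero_le : a * s ≤ K)
  -- step 2 : ψ (β * (t/K)) ≤ φ y (t/K) + h y ≤ 1 + C
  have step2 := (hy hyΩ (t / K)).2 step1
  have hv0 : (0:ℝ≥0) < β * (t / K) := mul_pos hβ0 (div_pos ht0 hK0)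
  set v : ℝ≥0 := β * (t / K) with hvdef
  have step2' : ψ ↑v ≤ 1 + ↑C := by
    calc ψ ↑v ≤ φ y ↑(t / K) + ↑(h y) := step2
      _ ≤ 1 + ↑C := add_le_add step1 (by exact_mod_cast hCy hyΩ)
  -- step 3 : ψ (v / K₂) ≤ 1
  have step3 : ψ ↑(v / K₂) ≤ 1 := by
    calc ψ ↑(v / K₂) ≤ ↑a' * ψ ↑v / ↑K₂ := downscale ha'inc hv0 hK21
      _ ≤ ↑a' * (1 + ↑C) / ↑K₂ := by gcongr
      _ ≤ 1 := by
          rw [ENNReal.div_le_iff (by exact_mod_cast hK20.ne') ENNReal.coe_ne_top, one_mul]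
          calc (↑a' * (1 + ↑C) : ℝ≥0∞) = ↑(a' * (1 + C)) := by push_cast; ring
            _ ≤ ↑K₂ := by exact_mod_cast (le_add_of_nonneg_right zero_le : a' * (1+C) ≤ K₂)
  -- step 4 : conclude
  have step4 := (hx hxΩ (v / K₂)).1 step3
  have harg : β * (v / K₂) = β * β / (K * K₂) * t := by
    field_simp [hvdef]
    rw [hvdef]; field_simp
  have hargE : (↑(β * β / (K * K₂)) * ↑t : ℝ≥0∞) = ↑β * ↑(v / K₂) := by
    rw [← ENNReal.coe_mul, ← ENNReal.coe_mul, harg]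
  rw [hargE]
  calc φ x (↑β * ↑(v / K₂)) ≤ ψ ↑(v / K₂) + ↑(h x) := step4
    _ ≤ ↑a' * ψ ↑v / ↑K₂ + ↑(h x) := by gcongr; exact downscale ha'inc hv0 hK21
    _ ≤ ψ ↑v + ↑(h x) := by
        gcongr
        have ha'K : a' ≤ K₂ := by
          calc a' ≤ a' * (1 + C) := le_mul_of_one_le_right zero_le le_self_add
            _ ≤ K₂ := le_self_add
        calc ↑a' * ψ ↑v / ↑K₂ ≤ ↑K₂ * ψ ↑v / ↑K₂ := by gcongr
        _ = ψ ↑v := by rw [mul_comm, mul_div_assoc, ENNReal.div_self (by exact_mod_cast hK20.ne') ENNReal.coe_ne_top, mul_one]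
    _ ≤ (φ y ↑(t/K) + ↑(h y)) + ↑(h x) := by gcongr; exact step2
    _ ≤ (φ y ↑t + ↑(h y)) + ↑(h x) := by
        gcongr
        exact hmonoy hyΩ (by exact_mod_cast (div_le_self zero_le hK1.le : t / K ≤ t))
    _ = φ y ↑t + ↑(h x) + ↑(h y) := by ring

/-- limsup helper -/
lemma limsup_le_of_le_add {c : ℕ → ℝ≥0∞} (hc : Tendsto c atTop (𝓝 0))
    {f : ℕ → ℝ≥0∞} {B : ℝ≥0∞} (hf : ∀ᶠ j in atTop, f j ≤ B + c j) :
    Filter.limsup f atTop ≤ B := by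
  refine ENNReal.le_of_forall_pos_le_add fun ε hε hB => ?_
  have hev : ∀ᶠ j in atTop, c j ≤ (ε : ℝ≥0∞) :=
    ENNReal.tendsto_nhds_zero.mp hc ε (by exact_mod_cast hε)
  have hev2 : ∀ᶠ j in atTop, f j ≤ B + ε := by
    filter_upwards [hf, hev] with j h1 h2
    exact h1.trans (add_le_add_right h2 B)
  calc Filter.limsup f atTop ≤ Filter.limsup (fun _ => B + (ε : ℝ≥0∞)) atTop :=
        Filter.limsup_le_limsup hev2
    _ = B + ε := Filter.limsup_const _

/-- tendsto of the coerced h-values -/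
lemma ctendsto (g : ℕ → ℝ≥0) (hg : ∀ j, g j ≤ (j + 1 : ℝ≥0)⁻¹) :
    Tendsto (fun j => (g j : ℝ≥0∞)) atTop (𝓝 0) := by
  have hr : Tendsto (fun j : ℕ => (((j : ℝ≥0) + 1)⁻¹ : ℝ≥0)) atTop (𝓝 0) := by
    rw [← NNReal.tendsto_coe]
    simpa using tendsto_one_div_add_atTop_nhds_zero_nat (𝕜 := ℝ)
  have h1 : Tendsto (fun j : ℕ => ((((j : ℝ≥0) + 1)⁻¹ : ℝ≥0) : ℝ≥0∞)) atTop (𝓝 0) := by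
    rw [← ENNReal.coe_zero, ENNReal.tendsto_coe]
    exact hr
  refine tendsto_of_tendsto_of_tendsto_of_le_of_le tendsto_const_nhds h1
    (fun j => zero_le) (fun j => ENNReal.coe_le_coe.mpr ?_)
  exact_mod_cast hg j

/-- ENNReal algebra shuffle -/
lemma ennreal_shuffle (a s t F : ℝ≥0∞) : a * (F / t) * s = a * s / t * F := by
  rw [div_eq_mul_inv, div_eq_mul_inv]
  ring

set_option maxHeartbeats 2000000 in
/-- the forward direction -/
lemma char_of_a2w {n : ℕ} (Ω : Set (Rn n)) (hΩ : IsOpen Ω) (ω : Rn n → ℝ≥0∞)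
    (hw : IsWeight ω) (φ : Rn n → ℝ≥0∞ → ℝ≥0∞) (hφ : IsWeakPhi Ω φ) (hA : A2w Ω ω φ) :
    ∃ ψ : ℝ≥0∞ → ℝ≥0∞, IsWeakPhi0 ψ ∧ ∃ h : Rn n → ℝ≥0, MemL1wLinf Ω ω h ∧
      ∃ β : ℝ≥0, 0 < β ∧ β ≤ 1 ∧
        ∀ᵐ x ∂(volume : Measure (Rn n)), x ∈ Ω → ∀ t : ℝ≥0,
          (ψ t ≤ 1 → φ x (β * t) ≤ ψ t + h x) ∧
          (φ x t ≤ 1 → ψ (β * t) ≤ φ x t + h x) := by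
  by_cases hΩ0 : (volume : Measure (Rn n)) Ω = 0
  · -- trivial case: Ω is null
    refine ⟨id, ?_, 0, ?_, 1, zero_lt_one, le_refl 1, ?_⟩
    · constructor
      · exact monotone_id
      · rfl
      · exact tendsto_nhdsWithin_of_tendsto_nhds
          (by simpa using ENNReal.continuous_coe.tendsto (0 : ℝ≥0))
      · exact ENNReal.tendsto_coe_nhds_top.mpr tendsto_id
      · refine ⟨1, le_refl 1, fun s t hs hst => ?_⟩
        simp only [id]
        rw [ENNReal.div_self (by exact_mod_cast hs.ne') ENNReal.coe_ne_top,
          ENNReal.div_self (by exact_mod_cast (hs.trans hst).ne') ENNReal.coe_ne_top]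
        simp
    · exact ⟨measurable_const, by simp, 0, Filter.Eventually.of_forall fun x hx => le_refl 0⟩
    · have : ∀ᵐ x ∂(volume : Measure (Rn n)), x ∉ Ω := by
        rw [← measure_eq_zero_iff_ae_notMem] at *; exact hΩ0
      filter_upwards [this] with x hx hxΩ
      exact absurd hxΩ hx
  -- main case : Ω has positive measure
  obtain ⟨β₂, hβ₂0, hβ₂1, h, ⟨hmeas, hint, C, hC⟩, P⟩ := hA 2 (by norm_num)
  obtain ⟨a, ha1, haAE⟩ := hφ.aInc_one
  have hmΩ : MeasurableSet Ω := hΩ.measurableSet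
  -- the basic comparison predicate
  set Q : Rn n → Rn n → ℝ≥0 → Prop := fun x y r =>
    x ∈ Ω → y ∈ Ω → φ y ↑r ≤ 2 → φ x ↑(β₂ * r) ≤ φ y ↑r + ↑(h x) + ↑(h y) with hQdef
  have hP : ∀ᵐ x ∂(volume : Measure (Rn n)), ∀ᵐ y ∂(volume : Measure (Rn n)),
      ∀ r : ℝ≥0, Q x y r := by
    filter_upwards [P] with x hx
    filter_upwards [hx] with y hy
    intro r h1 h2 h3
    exact hy h1 h2 r h3
  have hφr : ∀ r' : ℝ≥0, Measurable (fun z => φ z (r' : ℝ≥0∞)) :=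
    fun r' => hφ.meas _ measurable_const
  have hQmeas : ∀ r : ℝ≥0, MeasurableSet {p : Rn n × Rn n | Q p.1 p.2 r} := by
    intro r
    have hset : {p : Rn n × Rn n | Q p.1 p.2 r} =
        ((Ω ×ˢ (univ : Set (Rn n))) ∩ ((univ : Set (Rn n)) ×ˢ Ω) ∩
          {p : Rn n × Rn n | φ p.2 ↑r ≤ 2})ᶜ ∪
          {p : Rn n × Rn n | φ p.1 ↑(β₂ * r) ≤ φ p.2 ↑r + ↑(h p.1) + ↑(h p.2)} := by
      ext p
      simp only [hQdef, mem_setOf_eq, mem_union, mem_compl_iff, mem_inter_iff, mem_prod,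
        mem_univ, and_true, true_and]
      tauto
    rw [hset]
    have hc : Measurable ((↑) : ℝ≥0 → ℝ≥0∞) := ENNReal.continuous_coe.measurable
    refine MeasurableSet.union (MeasurableSet.compl ?_) ?_
    · exact ((hmΩ.prod MeasurableSet.univ).inter (MeasurableSet.univ.prod hmΩ)).inter
        (measurableSet_le ((hφr r).comp measurable_snd) measurable_const)
    · exact measurableSet_le ((hφr _).comp measurable_fst)
        ((((hφr r).comp measurable_snd).add (hc.comp (hmeas.comp measurable_fst))).add
          (hc.comp (hmeas.comp measurable_snd)))
  have hswap : ∀ r : ℝ≥0, ∀ᵐ y ∂(volume : Measure (Rn n)), ∀ᵐ x ∂(volume : Measure (Rn n)),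
      Q x y r := by
    intro r
    refine (Measure.ae_ae_comm (hQmeas r)).mp ?_
    filter_upwards [hP] with x hx using hx.mono fun y hy => hy r
  set e : ℚ → ℝ≥0 := fun q => Real.toNNReal (q : ℝ) with hedef
  have hswapQ : ∀ᵐ y ∂(volume : Measure (Rn n)), ∀ᵐ x ∂(volume : Measure (Rn n)),
      ∀ q : ℚ, Q x y (e q) := by
    have h1 : ∀ᵐ y ∂(volume : Measure (Rn n)), ∀ q : ℚ,
        ∀ᵐ x ∂(volume : Measure (Rn n)), Q x y (e q) := ae_all_iff.mpr fun q => hswap (e q)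
    exact h1.mono fun y hy => ae_all_iff.mpr hy
  -- the bundle of good-point properties
  set G : Rn n → Prop := fun z =>
    (z ∈ Ω → Monotone (φ z)) ∧ (z ∈ Ω → φ z 0 = 0) ∧
    (z ∈ Ω → Tendsto (fun t : ℝ≥0 => φ z t) (𝓝[>] 0) (𝓝 0)) ∧
    (z ∈ Ω → Tendsto (fun t : ℝ≥0 => φ z t) atTop (𝓝 ∞)) ∧
    (z ∈ Ω → ∀ s t : ℝ≥0, 0 < s → s < t →
      φ z s / (s : ℝ≥0∞) ^ (1:ℝ) ≤ a * (φ z t / (t : ℝ≥0∞) ^ (1:ℝ))) ∧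
    (z ∈ Ω → h z ≤ C) ∧
    (∀ᵐ y ∂(volume : Measure (Rn n)), ∀ r : ℝ≥0, Q z y r) ∧
    (∀ᵐ x ∂(volume : Measure (Rn n)), ∀ q : ℚ, Q x z (e q)) with hGdef
  have hG : ∀ᵐ z ∂(volume : Measure (Rn n)), G z := by
    filter_upwards [hφ.mono, hφ.map_zero, hφ.tendsto_zero, hφ.tendsto_top, haAE, hC, hP,
      hswapQ] with z h1 h2 h3 h4 h5 h6 h7 h8
    exact ⟨h1, h2, h3, h4, h5, h6, h7, h8⟩
  by_cases hcase : ∀ ε : ℝ≥0, 0 < ε → (volume : Measure (Rn n)) {z | z ∈ Ω ∧ h z < ε} ≠ 0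
  · -- Case B : points with arbitrarily small h exist
    have hXex : ∀ j : ℕ, ∃ z, (z ∈ Ω ∧ h z < ((j : ℝ≥0) + 1)⁻¹) ∧ G z := by
      intro j
      have hpos : (0 : ℝ≥0) < ((j : ℝ≥0) + 1)⁻¹ := by positivity
      have hne : ({z | z ∈ Ω ∧ h z < ((j : ℝ≥0) + 1)⁻¹} ∩ {z | G z}).Nonempty := by
        apply nonempty_of_measure_ne_zero (μ := (volume : Measure (Rn n)))
        rw [measure_inter_conull hG]
        exact hcase _ hpos
      obtain ⟨z, hz1, hz2⟩ := hne
      exact ⟨z, hz1, hz2⟩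
    choose X hX using hXex
    have hXΩ : ∀ j, X j ∈ Ω := fun j => (hX j).1.1
    have hXh : ∀ j, h (X j) < ((j : ℝ≥0) + 1)⁻¹ := fun j => (hX j).1.2
    have hXmono : ∀ j, Monotone (φ (X j)) := fun j => (hX j).2.1 (hXΩ j)
    have hXzero : ∀ j, φ (X j) 0 = 0 := fun j => (hX j).2.2.1 (hXΩ j)
    have hXtt : ∀ j, Tendsto (fun t : ℝ≥0 => φ (X j) t) atTop (𝓝 ∞) :=
      fun j => (hX j).2.2.2.2.1 (hXΩ j)
    have hXinc : ∀ j, ∀ s t : ℝ≥0, 0 < s → s < t →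
        φ (X j) s / (s : ℝ≥0∞) ^ (1:ℝ) ≤ a * (φ (X j) t / (t : ℝ≥0∞) ^ (1:ℝ)) :=
      fun j => (hX j).2.2.2.2.2.1 (hXΩ j)
    have hXP : ∀ j, ∀ᵐ y ∂(volume : Measure (Rn n)), ∀ r : ℝ≥0, Q (X j) y r :=
      fun j => (hX j).2.2.2.2.2.2.2.1
    have hXSw : ∀ j, ∀ᵐ x ∂(volume : Measure (Rn n)), ∀ q : ℚ, Q x (X j) (e q) :=
      fun j => (hX j).2.2.2.2.2.2.2.2
    -- the auxiliary sequence z_k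
    have hZex : ∀ k : ℕ, ∃ z, (z ∈ Ω ∧ h z < ((k : ℝ≥0) + 1)⁻¹) ∧ G z ∧
        ∀ j, ∀ r : ℝ≥0, Q (X j) z r := by
      intro k
      have hpos : (0 : ℝ≥0) < ((k : ℝ≥0) + 1)⁻¹ := by positivity
      have hfull : ∀ᵐ z ∂(volume : Measure (Rn n)), G z ∧ ∀ j, ∀ r : ℝ≥0, Q (X j) z r :=
        hG.and (ae_all_iff.mpr hXP)
      have hne : ({z | z ∈ Ω ∧ h z < ((k : ℝ≥0) + 1)⁻¹} ∩
          {z | G z ∧ ∀ j, ∀ r : ℝ≥0, Q (X j) z r}).Nonempty := by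
        apply nonempty_of_measure_ne_zero (μ := (volume : Measure (Rn n)))
        rw [measure_inter_conull hfull]
        exact hcase _ hpos
      obtain ⟨z, hz1, hz2⟩ := hne
      exact ⟨z, hz1, hz2.1, hz2.2⟩
    choose Z hZ using hZex
    have hZΩ : ∀ k, Z k ∈ Ω := fun k => (hZ k).1.1
    have hZh : ∀ k, h (Z k) < ((k : ℝ≥0) + 1)⁻¹ := fun k => (hZ k).1.2
    have hZtz : ∀ k, Tendsto (fun t : ℝ≥0 => φ (Z k) t) (𝓝[>] 0) (𝓝 0) :=
      fun k => (hZ k).2.1.2.2.1 (hZΩ k)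
    have hZQ : ∀ k j, ∀ r : ℝ≥0, Q (X j) (Z k) r := fun k => (hZ k).2.2
    -- the coerced h-values tend to 0
    have hctend : Tendsto (fun j => (↑(h (X j)) : ℝ≥0∞)) atTop (𝓝 0) :=
      ctendsto _ fun j => (hXh j).le
    -- the threshold M
    obtain ⟨T, hT⟩ : ∃ T : ℝ≥0, ∀ u ≥ T, ((2 : ℝ≥0∞) + C + 1) < φ (X 0) u := by
      refine eventually_atTop.mp ((hXtt 0).eventually (lt_mem_nhds ?_))
      refine ENNReal.add_lt_top.mpr ⟨ENNReal.add_lt_top.mpr ⟨?_, ?_⟩, ?_⟩ <;>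
        simp [ENNReal.coe_lt_top]
    set M : ℝ≥0 := T / β₂ + 1 with hMdef
    have hM1 : (1 : ℝ≥0) ≤ M := le_add_self
    -- the a.e. upper bound on t when φ x t ≤ 1
    have hMb : ∀ᵐ x ∂(volume : Measure (Rn n)), x ∈ Ω → ∀ t : ℝ≥0, φ x ↑t ≤ 1 → t ≤ M := by
      filter_upwards [hXP 0, hC] with x hx hCx hxΩ t hφt
      by_contra hgt
      push_neg at hgt
      have h1 : T ≤ β₂ * t := by
        calc T = β₂ * (T / β₂) := by rw [mul_div_cancel₀ _ hβ₂0.ne']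
          _ ≤ β₂ * M := mul_le_mul_right le_self_add β₂
          _ ≤ β₂ * t := mul_le_mul_right hgt.le β₂
      have h2 := hT (β₂ * t) h1
      have h3 : φ (X 0) ↑(β₂ * t) ≤ (2 : ℝ≥0∞) + C + 1 := by
        calc φ (X 0) ↑(β₂ * t) ≤ φ x ↑t + ↑(h (X 0)) + ↑(h x) :=
              hx t (hXΩ 0) hxΩ (hφt.trans one_le_two)
          _ ≤ 1 + 1 + ↑C := by
              have hX0le : (↑(h (X 0)) : ℝ≥0∞) ≤ 1 := by
                have h0 := (hXh 0).le
                simp only [Nat.cast_zero, zero_add, inv_one] at h0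
                exact_mod_cast h0
              exact add_le_add (add_le_add hφt hX0le) (by exact_mod_cast hCx hxΩ)
          _ ≤ (2 : ℝ≥0∞) + C + 1 := by
              rw [show (2 : ℝ≥0∞) + ↑C + 1 = 1 + 1 + ↑C + 1 by ring]
              exact le_add_of_nonneg_right zero_le
      exact absurd h3 (not_le.mpr h2)
    -- the limit function
    set L : ℝ≥0∞ → ℝ≥0∞ := fun u => Filter.limsup (fun j => φ (X j) u) atTop with hLdef
    set ψ : ℝ≥0∞ → ℝ≥0∞ := fun u => L u + (if u ≤ (M : ℝ≥0∞) then 0 else ∞) with hψdef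
    have hψL : ∀ u, L u ≤ ψ u := fun u => self_le_add_right _ _
    have hψeq : ∀ u : ℝ≥0∞, u ≤ (M : ℝ≥0∞) → ψ u = L u := by
      intro u hu
      rw [hψdef]
      simp only [if_pos hu, add_zero]
    refine ⟨ψ, ?_, h, ⟨hmeas, hint, C, hC⟩, β₂ / 2, by positivity,
      (div_le_self zero_le one_le_two).trans hβ₂1, ?_⟩
    · -- ψ is a weak Φ-function
      constructor
      · -- monotone
        intro u v huv
        have hLm : L u ≤ L v :=
          Filter.limsup_le_limsup (Eventually.of_forall fun j => hXmono j huv)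
        by_cases hv : v ≤ (M : ℝ≥0∞)
        · rw [hψeq u (huv.trans hv), hψeq v hv]
          exact hLm
        · rw [hψdef]
          simp only [if_neg hv, add_top]
          exact le_top
      · -- ψ 0 = 0
        rw [hψeq 0 zero_le, hLdef]
        simp only
        rw [show (fun j => φ (X j) 0) = fun _ : ℕ => (0 : ℝ≥0∞) from funext hXzero,
          Filter.limsup_const]
      · -- tendsto zero
        rw [ENNReal.tendsto_nhds_zero]
        intro ε hε
        set ε₀ : ℝ≥0∞ := min ε 1 with hε₀def
        have hε₀0 : 0 < ε₀ := lt_min hε zero_lt_one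
        have hε₀1 : ε₀ ≤ 1 := min_le_right _ _
        have hε₀ε : ε₀ ≤ ε := min_le_left _ _
        -- choose k with h (Z k) ≤ ε₀/2
        obtain ⟨m, hm⟩ := ENNReal.exists_inv_nat_lt (show ε₀ / 2 ≠ 0 by
          simp [ENNReal.div_eq_zero_iff, hε₀0.ne'])
        have hk : (↑(h (Z m)) : ℝ≥0∞) ≤ ε₀ / 2 := by
          refine le_trans ?_ hm.le
          have := hZh m
          have h1 : (↑(h (Z m)) : ℝ≥0∞) ≤ (((m : ℝ≥0) + 1)⁻¹ : ℝ≥0) := by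
            exact_mod_cast this.le
          refine h1.trans ?_
          rw [ENNReal.coe_inv (by positivity)]
          push_cast
          refine ENNReal.inv_le_inv.mpr ?_
          exact le_add_of_nonneg_right zero_le
        -- choose δ with φ (Z m) small on (0, δ)
        have hev := ENNReal.tendsto_nhds_zero.mp (hZtz m) (ε₀ / 2)
          (ENNReal.div_pos hε₀0.ne' (by norm_num))
        obtain ⟨δ, hδ0, hδ⟩ : ∃ δ : ℝ≥0, 0 < δ ∧ ∀ u : ℝ≥0, 0 < u → u < δ →
            φ (Z m) ↑u ≤ ε₀ / 2 := by
          rw [Filter.eventually_iff, mem_nhdsGT_iff_exists_Ioo_subset] at hev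
          obtain ⟨δ, hδmem, hδsub⟩ := hev
          exact ⟨δ, hδmem, fun u h1 h2 => hδsub ⟨h1, h2⟩⟩
        -- conclude
        set δ' : ℝ≥0 := min (β₂ * δ) (min M 1) with hδ'def
        have hδ'0 : 0 < δ' := lt_min (by positivity) (lt_min (lt_of_lt_of_le zero_lt_one hM1)
          zero_lt_one)
        filter_upwards [Ioo_mem_nhdsGT_of_mem (⟨le_refl 0, hδ'0⟩ : (0:ℝ≥0) ∈ Ico 0 δ')]
          with u hu
        obtain ⟨hu0, huδ⟩ := hu
        have huM : (↑u : ℝ≥0∞) ≤ ↑M :=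
          ENNReal.coe_le_coe.mpr (le_trans huδ.le ((min_le_right _ _).trans (min_le_left _ _)))
        rw [hψeq _ huM]
        have hptwise : ∀ j, φ (X j) ↑u ≤ (ε₀ / 2 + ε₀ / 2) + ↑(h (X j)) := by
          intro j
          have ht₀ : (0 : ℝ≥0) < u / β₂ := div_pos hu0 hβ₂0
          have ht₀δ : u / β₂ < δ := by
            rw [div_lt_iff₀ hβ₂0]
            calc u < δ' := huδ
              _ ≤ β₂ * δ := min_le_left _ _
              _ = δ * β₂ := mul_comm _ _
          have htrig : φ (Z m) ↑(u / β₂) ≤ 2 :=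
            le_trans (hδ _ ht₀ ht₀δ) (le_trans (ENNReal.half_le_self.trans hε₀1) one_le_two)
          have hkey := hZQ m j (u / β₂) (hXΩ j) (hZΩ m) htrig
          rw [mul_div_cancel₀ _ hβ₂0.ne'] at hkey
          calc φ (X j) ↑u ≤ φ (Z m) ↑(u / β₂) + ↑(h (X j)) + ↑(h (Z m)) := hkey
            _ ≤ ε₀ / 2 + ↑(h (X j)) + ε₀ / 2 :=
                add_le_add (add_le_add (hδ _ ht₀ ht₀δ) le_rfl) hk
            _ = (ε₀ / 2 + ε₀ / 2) + ↑(h (X j)) := by ring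
        have hLle : L ↑u ≤ ε₀ / 2 + ε₀ / 2 :=
          limsup_le_of_le_add hctend (Eventually.of_forall hptwise)
        calc L ↑u ≤ ε₀ / 2 + ε₀ / 2 := hLle
          _ = ε₀ := ENNReal.add_halves _
          _ ≤ ε := hε₀ε
      · -- tendsto top
        have hev : ∀ᶠ u : ℝ≥0 in atTop, (fun t : ℝ≥0 => ψ ↑t) u = ⊤ := by
          refine eventually_atTop.mpr ⟨M + 1, fun u hu => ?_⟩
          have : ¬ ((u : ℝ≥0∞) ≤ ↑M) := by
            rw [not_le]
            exact_mod_cast lt_of_lt_of_le (lt_add_one M) hu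
          rw [hψdef]
          simp only [if_neg this, add_top]
        exact Tendsto.congr' (hev.mono fun u hu => hu.symm) tendsto_const_nhds
      · -- aInc
        refine ⟨a, ha1, fun s t hs hst => ?_⟩
        by_cases hts : (t : ℝ≥0∞) ≤ ↑M
        · have hss : (s : ℝ≥0∞) ≤ ↑M := le_trans (ENNReal.coe_le_coe.mpr hst.le) hts
          rw [hψeq _ hts, hψeq _ hss]
          have hs' : ((s : ℝ≥0∞)) ≠ 0 := by exact_mod_cast hs.ne'
          have ht' : ((t : ℝ≥0∞)) ≠ 0 := by exact_mod_cast (hs.trans hst).ne'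
          have hpt : ∀ j, φ (X j) ↑s ≤ ↑a * ↑s / ↑t * φ (X j) ↑t := by
            intro j
            have hj := hXinc j s t hs hst
            simp only [ENNReal.rpow_one] at hj
            rw [ENNReal.div_le_iff hs' ENNReal.coe_ne_top] at hj
            calc φ (X j) ↑s ≤ ↑a * (φ (X j) ↑t / ↑t) * ↑s := hj
              _ = ↑a * ↑s / ↑t * φ (X j) ↑t := ennreal_shuffle _ _ _ _
          have hL : L ↑s ≤ ↑a * ↑s / ↑t * L ↑t := by
            calc L ↑s ≤ Filter.limsup (fun j => ↑a * ↑s / ↑t * φ (X j) ↑t) atTop :=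
                  Filter.limsup_le_limsup (Eventually.of_forall hpt)
              _ = ↑a * ↑s / ↑t * L ↑t := ENNReal.limsup_const_mul_of_ne_top
                  ((ENNReal.div_lt_top (ENNReal.mul_ne_top ENNReal.coe_ne_top
                    ENNReal.coe_ne_top) ht').ne)
          rw [ENNReal.div_le_iff hs' ENNReal.coe_ne_top]
          calc L ↑s ≤ ↑a * ↑s / ↑t * L ↑t := hL
            _ = ↑a * (L ↑t / ↑t) * ↑s := (ennreal_shuffle _ _ _ _).symm
        · have hψt : ψ ↑t = ⊤ := by
            rw [hψdef]
            simp only [if_neg hts, add_top]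
          rw [hψt, ENNReal.top_div_coe, ENNReal.mul_top (by exact_mod_cast
            (lt_of_lt_of_le zero_lt_one ha1).ne' : (a : ℝ≥0∞) ≠ 0)]
          exact le_top
    · -- the a.e. comparison
      filter_upwards [hG, ae_all_iff.mpr hXP, ae_all_iff.mpr hXSw, hMb]
        with x hxG hxP hxSw hxM hxΩ t
      obtain ⟨hxmono, hxzero, -, -, -, -, -, -⟩ := hxG
      constructor
      · -- condition 1
        intro hψt
        rcases eq_or_lt_of_le (zero_le (a := t)) with ht0 | ht0
        · rw [← ht0]
          simp only [ENNReal.coe_zero, mul_zero, hxzero hxΩ]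
          exact zero_le
        have hL1 : L ↑t ≤ 1 := le_trans (hψL _) hψt
        have hLne : L ↑t ≠ ⊤ := (lt_of_le_of_lt hL1 ENNReal.one_lt_top).ne
        refine le_trans (show φ x (↑(β₂ / 2) * ↑t) ≤ L ↑t + ↑(h x) from ?_)
          (add_le_add_left (hψL _) _)
        refine ENNReal.le_of_forall_pos_le_add fun ε hε hfin => ?_
        set ε' : ℝ≥0 := min (ε / 2) 1 with hε'def
        have hε'0 : 0 < ε' := lt_min (by positivity) zero_lt_one
        have hε'1 : ε' ≤ 1 := min_le_right _ _
        have h2ε' : (ε' : ℝ≥0∞) + ε' ≤ ε := by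
          calc (ε' : ℝ≥0∞) + ε' ≤ ↑(ε / 2) + ↑(ε / 2) := by
                gcongr <;> exact_mod_cast min_le_left _ _
            _ = ε := by
                rw [← ENNReal.coe_add]
                congr 1
                exact add_halves ε
        have hev1 : ∀ᶠ j in atTop, φ (X j) ↑t < L ↑t + ↑ε' :=
          Filter.eventually_lt_of_limsup_lt
            (ENNReal.lt_add_right hLne (by exact_mod_cast hε'0.ne'))
        have hev2 : ∀ᶠ j in atTop, (↑(h (X j)) : ℝ≥0∞) ≤ ↑ε' :=
          ENNReal.tendsto_nhds_zero.mp hctend _ (by exact_mod_cast hε'0)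
        obtain ⟨j, hj1, hj2⟩ := (hev1.and hev2).exists
        have hhalf : ((t : ℝ) / 2) < (t : ℝ) := half_lt_self (by exact_mod_cast ht0)
        obtain ⟨q, hq1, hq2⟩ := exists_rat_btwn hhalf
        have hq0 : (0 : ℝ) < (q : ℝ) := lt_of_le_of_lt (by positivity) hq1
        have hq'le : e q ≤ t := by
          rw [hedef]
          exact Real.toNNReal_le_iff_le_coe.mpr hq2.le
        have hq'ge : t / 2 ≤ e q := by
          rw [hedef, Real.le_toNNReal_iff_coe_le hq0.le]
          push_cast
          exact hq1.le
        have htrig : φ (X j) ↑(e q) ≤ 2 := by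
          calc φ (X j) ↑(e q) ≤ φ (X j) ↑t := hXmono j (ENNReal.coe_le_coe.mpr hq'le)
            _ ≤ L ↑t + ↑ε' := hj1.le
            _ ≤ 1 + 1 := add_le_add hL1 (by exact_mod_cast hε'1)
            _ = 2 := one_add_one_eq_two
        have hkey := hxSw j q hxΩ (hXΩ j) htrig
        calc φ x (↑(β₂ / 2) * ↑t) ≤ φ x ↑(β₂ * e q) := by
              refine hxmono hxΩ ?_
              rw [← ENNReal.coe_mul]
              refine ENNReal.coe_le_coe.mpr ?_
              calc β₂ / 2 * t = β₂ * (t / 2) := by rw [div_mul_eq_mul_div, mul_div_assoc]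
                _ ≤ β₂ * e q := mul_le_mul_right hq'ge β₂
          _ ≤ φ (X j) ↑(e q) + ↑(h x) + ↑(h (X j)) := hkey
          _ ≤ (L ↑t + ↑ε') + ↑(h x) + ↑ε' :=
              add_le_add (add_le_add
                (le_trans (hXmono j (ENNReal.coe_le_coe.mpr hq'le)) hj1.le) le_rfl) hj2
          _ = L ↑t + ↑(h x) + (↑ε' + ↑ε') := by ring
          _ ≤ L ↑t + ↑(h x) + ↑ε := add_le_add_right h2ε' _
      · -- condition 2
        intro hφxt
        have htM : t ≤ M := hxM hxΩ t hφxt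
        have hargM : (↑(β₂ / 2) * ↑t : ℝ≥0∞) ≤ ↑M := by
          rw [← ENNReal.coe_mul]
          refine ENNReal.coe_le_coe.mpr (le_trans ?_ htM)
          calc β₂ / 2 * t ≤ 1 * t := by
                gcongr
                exact (div_le_self zero_le one_le_two).trans hβ₂1
            _ = t := one_mul t
        rw [hψeq _ hargM]
        refine limsup_le_of_le_add hctend (Eventually.of_forall fun j => ?_)
        have hkey := hxP j t (hXΩ j) hxΩ (hφxt.trans one_le_two)
        calc φ (X j) (↑(β₂ / 2) * ↑t) ≤ φ (X j) ↑(β₂ * t) := by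
              refine hXmono j ?_
              rw [← ENNReal.coe_mul]
              refine ENNReal.coe_le_coe.mpr ?_
              exact mul_le_mul_left (div_le_self zero_le one_le_two) t
          _ ≤ φ x ↑t + ↑(h (X j)) + ↑(h x) := hkey
          _ = (φ x ↑t + ↑(h x)) + ↑(h (X j)) := by ring
  · -- Case A : h is essentially bounded below on Ω; then ω(Ω) < ∞
    push_neg at hcase
    obtain ⟨ε, hε0, hεnull⟩ := hcase
    have haeε : ∀ᵐ z ∂(volume : Measure (Rn n)), z ∈ Ω → ε ≤ h z := by
      have := measure_eq_zero_iff_ae_notMem.mp hεnull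
      filter_upwards [this] with z hz hzΩ
      by_contra hlt
      exact hz ⟨hzΩ, not_le.mp hlt⟩
    -- ω(Ω) is finite
    have hwfin : wSet ω Ω ≠ ∞ := by
      intro htop
      apply hint
      rw [eq_top_iff]
      calc (⊤ : ℝ≥0∞) = ↑ε * wSet ω Ω := by
            rw [htop, ENNReal.mul_top (by exact_mod_cast hε0.ne')]
        _ = ∫⁻ z in Ω, ↑ε * ω z := by rw [wSet, lintegral_const_mul _ hw.1]
        _ ≤ ∫⁻ z in Ω, ↑(h z) * ω z := by
            refine lintegral_mono_ae ?_
            filter_upwards [ae_restrict_of_ae haeε, self_mem_ae_restrict hmΩ] with z hz hzΩ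
            exact mul_le_mul_left (by exact_mod_cast hz hzΩ) _
    -- pick a good point x₀ ∈ Ω
    have hne : (Ω ∩ {z | G z}).Nonempty := by
      apply nonempty_of_measure_ne_zero (μ := (volume : Measure (Rn n)))
      rw [measure_inter_conull hG]
      exact hΩ0
    obtain ⟨x₀, hx₀Ω, hx₀G⟩ := hne
    obtain ⟨hx₀mono, hx₀zero, hx₀tz, hx₀tt, hx₀inc, hx₀C, hx₀P, hx₀Sw⟩ := hx₀G
    refine ⟨φ x₀, ?_, fun z => h z + h x₀, ?_, β₂ / 2, by positivity,
      (div_le_self zero_le one_le_two).trans hβ₂1, ?_⟩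
    · -- φ x₀ is a weak Φ-function
      refine ⟨hx₀mono hx₀Ω, hx₀zero hx₀Ω, hx₀tz hx₀Ω, hx₀tt hx₀Ω, a, ha1, ?_⟩
      intro s t hs hst
      have := hx₀inc hx₀Ω s t hs hst
      simpa [ENNReal.rpow_one] using this
    · -- h + h x₀ is in L¹(Ω,ω) ∩ L∞
      refine ⟨hmeas.add measurable_const, ?_, C + h x₀, ?_⟩
      · have hm1 : Measurable fun z => (↑(h z) : ℝ≥0∞) * ω z :=
          (ENNReal.continuous_coe.measurable.comp hmeas).mul hw.1
        have heq : ∫⁻ z in Ω, ((h z + h x₀ : ℝ≥0) : ℝ≥0∞) * ω z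
            = (∫⁻ z in Ω, ↑(h z) * ω z) + ↑(h x₀) * wSet ω Ω := by
          rw [wSet, ← lintegral_const_mul _ hw.1, ← lintegral_add_left hm1]
          exact lintegral_congr fun z => by push_cast; ring
        rw [heq]
        exact ENNReal.add_ne_top.mpr ⟨hint, ENNReal.mul_ne_top ENNReal.coe_ne_top hwfin⟩
      · filter_upwards [hC] with z hz hzΩ
        exact add_le_add_left (hz hzΩ) _
    · -- the a.e. comparison
      filter_upwards [hG, hx₀P, hx₀Sw] with x hxG hxP hxSw hxΩ t
      obtain ⟨hxmono, hxzero, -, -, -, -, -, -⟩ := hxG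
      constructor
      · -- condition 1
        intro hψt
        rcases eq_or_lt_of_le (zero_le (a := t)) with ht0 | ht0
        · rw [← ht0]
          simp only [ENNReal.coe_zero, mul_zero, hxzero hxΩ]
          exact zero_le
        have hhalf : ((t : ℝ) / 2) < (t : ℝ) := half_lt_self (by exact_mod_cast ht0)
        obtain ⟨q, hq1, hq2⟩ := exists_rat_btwn hhalf
        have hq0 : (0 : ℝ) < (q : ℝ) := lt_of_le_of_lt (by positivity) hq1
        have hq'le : e q ≤ t := by
          rw [hedef]
          exact Real.toNNReal_le_iff_le_coe.mpr hq2.le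
        have hq'ge : t / 2 ≤ e q := by
          rw [hedef]
          rw [Real.le_toNNReal_iff_coe_le hq0.le]
          push_cast
          exact hq1.le
        have htrig : φ x₀ ↑(e q) ≤ 2 :=
          le_trans (le_trans (hx₀mono hx₀Ω (ENNReal.coe_le_coe.mpr hq'le)) hψt) one_le_two
        have hkey := hxSw q hxΩ hx₀Ω htrig
        calc φ x (↑(β₂ / 2) * ↑t) ≤ φ x ↑(β₂ * e q) := by
              refine hxmono hxΩ ?_
              rw [← ENNReal.coe_mul]
              refine ENNReal.coe_le_coe.mpr ?_
              calc β₂ / 2 * t = β₂ * (t / 2) := by rw [div_mul_eq_mul_div, mul_div_assoc]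
                _ ≤ β₂ * e q := mul_le_mul_right hq'ge β₂
          _ ≤ φ x₀ ↑(e q) + ↑(h x) + ↑(h x₀) := hkey
          _ ≤ φ x₀ ↑t + ↑(h x) + ↑(h x₀) := by
              gcongr
              exact hx₀mono hx₀Ω (ENNReal.coe_le_coe.mpr hq'le)
          _ = φ x₀ ↑t + ↑(h x + h x₀) := by push_cast; ring
      · -- condition 2
        intro hφxt
        have hkey := hxP t hx₀Ω hxΩ (le_trans hφxt one_le_two)
        calc φ x₀ (↑(β₂ / 2) * ↑t) ≤ φ x₀ ↑(β₂ * t) := by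
              refine hx₀mono hx₀Ω ?_
              rw [← ENNReal.coe_mul]
              refine ENNReal.coe_le_coe.mpr ?_
              exact mul_le_mul_left (div_le_self zero_le one_le_two) t
          _ ≤ φ x ↑t + ↑(h x₀) + ↑(h x) := hkey
          _ = φ x ↑t + ↑(h x + h x₀) := by push_cast; ring


/-- Characterization of (A2)_ω. -/
theorem a2w_iff
    (n : ℕ) (Ω : Set (Rn n)) (hΩ : IsOpen Ω) (ω : Rn n → ℝ≥0∞) (hw : IsWeight ω)
    (φ : Rn n → ℝ≥0∞ → ℝ≥0∞) (hφ : IsWeakPhi Ω φ) :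
    A2w Ω ω φ ↔
      ∃ ψ : ℝ≥0∞ → ℝ≥0∞, IsWeakPhi0 ψ ∧ ∃ h : Rn n → ℝ≥0, MemL1wLinf Ω ω h ∧
        ∃ β : ℝ≥0, 0 < β ∧ β ≤ 1 ∧
          ∀ᵐ x ∂(volume : Measure (Rn n)), x ∈ Ω → ∀ t : ℝ≥0,
            (ψ t ≤ 1 → φ x (β * t) ≤ ψ t + h x) ∧
            (φ x t ≤ 1 → ψ (β * t) ≤ φ x t + h x) := by
  constructor
  · intro hA
    exact char_of_a2w Ω hΩ ω hw φ hφ hA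
  · rintro ⟨ψ, hψ, h, hh, β, hβ0, hβ1, H⟩
    exact a2w_of_char Ω ω φ hφ ψ hψ h hh β hβ0 hβ1 H
end
end

section
/- Let Ω ⊆ ℝⁿ be open, let p : Ω → [1,∞] be measurable with 1/p ∈ P^log(Ω), and let ω ∈ A_∞. Then there exists a constant C > 0 such that ω(B)^{1/p_B^+ − 1/p_B^-} ≤ C for every open ball B ⊆ ℝⁿ. -/
open MeasureTheory Metric Filter Set
open scoped ENNReal NNReal Topology

noncomputable section

section AuxLemmas

open MeasureTheory Metric Filter Set
open scoped ENNReal NNReal Topology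

private lemma core_ineq (c₁ c₂ N K r s : ℝ) (hc₁ : 0 < c₁) (hc₂ : 0 < c₂)
    (hN : 0 ≤ N) (hK : 0 ≤ K) (hr : 0 < r) (hs : 0 ≤ s) :
    min 1 (min (c₁ / Real.log (Real.exp 1 + 1 / (2 * r)))
        (2 * c₂ / Real.log (Real.exp 1 + max 0 (s - r)))) *
      (N * Real.log ((r + s + 1) / r) + K)
    ≤ N * (Real.log 3 + Real.log 2 + 2 * c₂ * (1 + Real.log 2) + 2 * c₁) + K := by
  have he : (2:ℝ) ≤ Real.exp 1 := by nlinarith [Real.add_one_le_exp 1]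
  have hl2 : (0:ℝ) < Real.log 2 := Real.log_pos (by norm_num)
  have hl2' : Real.log 2 < 1 := by nlinarith [Real.log_two_lt_d9]
  have hl3 : (0:ℝ) ≤ Real.log 3 := Real.log_nonneg (by norm_num)
  have h2r : (0:ℝ) < 1 / (2 * r) := by positivity
  set D₁ := Real.log (Real.exp 1 + 1 / (2 * r)) with hD₁def
  set D₂ := Real.log (Real.exp 1 + max 0 (s - r)) with hD₂def
  have hD₁ : 1 ≤ D₁ := by
    have := Real.log_le_log (Real.exp_pos 1)
      (show Real.exp 1 ≤ Real.exp 1 + 1 / (2*r) by linarith)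
    rwa [Real.log_exp] at this
  have hD₂ : 1 ≤ D₂ := by
    have := Real.log_le_log (Real.exp_pos 1)
      (show Real.exp 1 ≤ Real.exp 1 + max 0 (s - r) by
        have := le_max_left (0:ℝ) (s - r); linarith)
    rwa [Real.log_exp] at this
  have hD₁0 : (0:ℝ) < D₁ := by linarith
  have hD₂0 : (0:ℝ) < D₂ := by linarith
  have hD₁r : -Real.log r - Real.log 2 ≤ D₁ := by
    have h5 : Real.log (1/(2*r)) ≤ D₁ := by
      rw [hD₁def]
      exact Real.log_le_log h2r (by linarith [Real.exp_pos 1])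
    have h6 : Real.log (1/(2*r)) = -(Real.log 2 + Real.log r) := by
      rw [one_div, Real.log_inv, Real.log_mul (by norm_num) hr.ne']
    linarith
  clear_value D₁ D₂
  set ε := min 1 (min (c₁ / D₁) (2 * c₂ / D₂)) with hεdef
  have hε0 : 0 ≤ ε := le_min zero_le_one (le_min (by positivity) (by positivity))
  have hε1 : ε ≤ 1 := min_le_left _ _
  have hεa : ε ≤ c₁ / D₁ := le_trans (min_le_right _ _) (min_le_left _ _)
  have hεb : ε ≤ 2 * c₂ / D₂ := le_trans (min_le_right _ _) (min_le_right _ _)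
  have hA0 : (0:ℝ) ≤ Real.log ((r + s + 1) / r) :=
    Real.log_nonneg ((le_div_iff₀ hr).2 (by linarith))
  set A := Real.log ((r + s + 1) / r) with hAdef
  clear_value ε
  clear_value A
  rcases le_or_gt (s + 1) (2 * r) with hcase | hcase
  · -- small case
    have hA : A ≤ Real.log 3 := by
      rw [hAdef]
      apply Real.log_le_log (by positivity)
      rw [div_le_iff₀ hr]; linarith
    have h1 : ε * (N * A + K) ≤ N * Real.log 3 + K := by
      have hna : 0 ≤ N * A + K := by positivity
      have h1' : ε * (N * A + K) ≤ N * A + K := by nlinarith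
      nlinarith [mul_le_mul_of_nonneg_left hA hN]
    have h2 : 0 ≤ N * (Real.log 2 + 2 * c₂ * (1 + Real.log 2) + 2 * c₁) := by
      apply mul_nonneg hN; nlinarith
    nlinarith
  · -- big case
    set m := max 0 (-Real.log r) with hmdef
    have hm0 : 0 ≤ m := le_max_left _ _
    clear_value m
    have hA : A ≤ Real.log 2 + Real.log (s + 1) + m := by
      have h2 : A ≤ Real.log (2 * (s + 1) / r) := by
        rw [hAdef]
        apply Real.log_le_log (by positivity)
        gcongr
        linarith
      have h3 : Real.log (2 * (s + 1) / r) = Real.log 2 + Real.log (s + 1) - Real.log r := by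
        rw [Real.log_div (by positivity) hr.ne', Real.log_mul (by norm_num) (by linarith)]
      have h4 : -Real.log r ≤ m := (le_max_right 0 (-Real.log r)).trans_eq hmdef.symm
      linarith
    have hls1 : 0 ≤ Real.log (s + 1) := Real.log_nonneg (by linarith)
    have hs1 : Real.log (s + 1) ≤ D₂ + Real.log 2 := by
      have hmx : (s - 1) / 2 ≤ max 0 (s - r) := by
        rcases le_total ((s:ℝ) - 1) 0 with h | h
        · calc (s-1)/2 ≤ 0 := by linarith
            _ ≤ _ := le_max_left _ _
        · calc (s-1)/2 ≤ s - r := by linarith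
            _ ≤ _ := le_max_right _ _
      have h7 : Real.log ((s + 1) / 2) ≤ D₂ := by
        rw [hD₂def]
        apply Real.log_le_log (by positivity)
        linarith only [hmx, he]
      have h5 : Real.log ((s+1)/2) = Real.log (s+1) - Real.log 2 :=
        Real.log_div (by linarith) (by norm_num)
      linarith
    have hεs1 : ε * Real.log (s + 1) ≤ 2 * c₂ * (1 + Real.log 2) := by
      calc ε * Real.log (s + 1) ≤ (2 * c₂ / D₂) * Real.log (s + 1) :=
            mul_le_mul_of_nonneg_right hεb hls1
        _ ≤ (2 * c₂ / D₂) * (D₂ + Real.log 2) :=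
            mul_le_mul_of_nonneg_left hs1 (by positivity)
        _ = 2 * c₂ + (2 * c₂ * Real.log 2) / D₂ := by field_simp
        _ ≤ 2 * c₂ + 2 * c₂ * Real.log 2 := by
            have : (2 * c₂ * Real.log 2) / D₂ ≤ 2 * c₂ * Real.log 2 :=
              div_le_self (by positivity) hD₂
            linarith
        _ = 2 * c₂ * (1 + Real.log 2) := by ring
    have hεm : ε * m ≤ 2 * c₁ := by
      have hm2 : m ≤ 2 * D₁ := by
        rw [hmdef]
        apply max_le (by linarith)
        rcases le_total (-Real.log r) 2 with h | h
        · linarith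
        · linarith
      calc ε * m ≤ (c₁ / D₁) * m := mul_le_mul_of_nonneg_right hεa hm0
        _ ≤ (c₁ / D₁) * (2 * D₁) := mul_le_mul_of_nonneg_left hm2 (by positivity)
        _ = 2 * c₁ := by field_simp
    have hεA : ε * A ≤ Real.log 2 + 2 * c₂ * (1 + Real.log 2) + 2 * c₁ := by
      have h7 : ε * A ≤ ε * (Real.log 2 + Real.log (s + 1) + m) :=
        mul_le_mul_of_nonneg_left hA hε0
      rw [mul_add, mul_add] at h7
      have h8 : ε * Real.log 2 ≤ Real.log 2 := by
        calc ε * Real.log 2 ≤ 1 * Real.log 2 := mul_le_mul_of_nonneg_right hε1 hl2.le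
          _ = Real.log 2 := one_mul _
      linarith only [h7, h8, hεs1, hεm]
    have h9 : ε * K ≤ K := by
      calc ε * K ≤ 1 * K := mul_le_mul_of_nonneg_right hε1 hK
        _ = K := one_mul _
    have h10 : N * (ε * A) ≤ N * (Real.log 2 + 2 * c₂ * (1 + Real.log 2) + 2 * c₁) :=
      mul_le_mul_of_nonneg_left hεA hN
    have h11 : 0 ≤ N * Real.log 3 := mul_nonneg hN hl3
    have h12 : ε * (N * A + K) = N * (ε * A) + ε * K := by ring
    rw [h12]
    have h13 : N * (Real.log 3 + Real.log 2 + 2 * c₂ * (1 + Real.log 2) + 2 * c₁)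
        = N * Real.log 3 + N * (Real.log 2 + 2 * c₂ * (1 + Real.log 2) + 2 * c₁) := by ring
    rw [h13]
    linarith

private lemma vol_ball_eq (n : ℕ) (z : Rn n) {r : ℝ} (hr : 0 < r) :
    volume (ball z r) = ENNReal.ofReal (r ^ n) * volume (ball (0 : Rn n) 1) := by
  rcases Nat.eq_zero_or_pos n with hn | hn
  · subst hn
    have hsub : ∀ (u : Rn 0) (s : ℝ), 0 < s → ball u s = univ := by
      intro u s hs
      refine eq_univ_of_forall fun x => ?_
      rw [mem_ball, Subsingleton.elim x u, dist_self]
      exact hs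
    rw [hsub z r hr, hsub 0 1 one_pos]
    simp
  · haveI : Nontrivial (Rn n) := by
      apply Module.nontrivial_of_finrank_pos (R := ℝ)
      rw [finrank_euclideanSpace_fin]
      exact hn
    rw [Measure.addHaar_ball volume z hr.le, finrank_euclideanSpace_fin]

private lemma wSet_ball_pos {n : ℕ} {ω : Rn n → ℝ≥0∞} (hm : Measurable ω)
    (hpos : ∀ᵐ x ∂(volume : Measure (Rn n)), 0 < ω x ∧ ω x < ∞)
    (z : Rn n) {r : ℝ} (hr : 0 < r) : wSet ω (ball z r) ≠ 0 := by
  intro h0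
  rw [wSet, lintegral_eq_zero_iff hm] at h0
  have hres : ∀ᵐ x ∂(volume.restrict (ball z r)), 0 < ω x :=
    ae_restrict_of_ae (hpos.mono fun x h => h.1)
  have hne : (volume.restrict (ball z r)) ≠ 0 := by
    rw [Ne, Measure.restrict_eq_zero]
    exact (measure_ball_pos volume z hr).ne'
  haveI := ae_neBot.mpr hne
  obtain ⟨x, hx1, hx2⟩ := (hres.and h0).exists
  exact hx1.ne' hx2

end AuxLemmas

set_option maxHeartbeats 2000000 in
/-- `ω(B)^{1/p_B^+ - 1/p_B^-} ≲ 1` for `ω ∈ A_∞` and `1/p ∈ P^log`. -/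
theorem wSet_ball_exponent_bound
    (n : ℕ) (Ω : Set (Rn n)) (hΩ : IsOpen Ω)
    (p : Rn n → ℝ≥0∞) (hpm : Measurable p) (hp1 : ∀ x ∈ Ω, 1 ≤ p x)
    (hlog : PLog Ω p) (ω : Rn n → ℝ≥0∞) (hω : MuckenhouptAinfty ω) :
    ∃ C : ℝ≥0, 0 < C ∧ ∀ (z : Rn n) (r : ℝ), 0 < r →
      wSet ω (ball z r) ^
          (((essSup p (volume.restrict (ball z r ∩ Ω)))⁻¹).toReal -
            ((essInf p (volume.restrict (ball z r ∩ Ω)))⁻¹).toReal) ≤ (C : ℝ≥0∞) := by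
  obtain ⟨q, hq1, ⟨hωm, hωae, hωfin⟩, C₀, hC₀top, hAq⟩ := hω
  obtain ⟨⟨c₁, hc₁, hHol⟩, pinf, hpinf1, c₂, hc₂, hDec⟩ := hlog
  have hq0 : (0:ℝ) < q := by linarith
  have hinv : ∀ x, invExp p x = ((p x)⁻¹).toReal := fun _ => rfl
  -- basic constants
  have hι0 : volume (ball (0 : Rn n) 1) ≠ 0 := (measure_ball_pos volume 0 one_pos).ne'
  have hιt : volume (ball (0 : Rn n) 1) ≠ ∞ := measure_ball_lt_top.ne
  set ω₀ : ℝ≥0∞ := min (wSet ω (ball (0 : Rn n) 1)) 1 with hω₀def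
  have hω₀0 : ω₀ ≠ 0 := by
    refine (lt_min ?_ one_pos).ne'
    exact pos_iff_ne_zero.2 (wSet_ball_pos hωm hωae 0 one_pos)
  have hω₀t : ω₀ ≠ ∞ := ((min_le_right _ _).trans_lt ENNReal.one_lt_top).ne
  have hC't : C₀ + 1 ≠ ∞ := ENNReal.add_ne_top.2 ⟨hC₀top, ENNReal.one_ne_top⟩
  set Cr := (C₀ + 1).toReal with hCrdef
  set ω₀r := ω₀.toReal with hω₀rdef
  have hω₀r0 : 0 < ω₀r := ENNReal.toReal_pos hω₀0 hω₀t
  have hω₀r1 : ω₀r ≤ 1 := by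
    have := ENNReal.toReal_mono ENNReal.one_ne_top (min_le_right (wSet ω (ball (0 : Rn n) 1)) 1)
    simpa using this
  have hCr1 : 1 ≤ Cr := by
    have := ENNReal.toReal_mono hC't (le_add_self (a := 1) (b := C₀))
    simpa using this
  set K := Real.log (Cr / ω₀r) with hKdef
  have hK0 : 0 ≤ K := Real.log_nonneg ((one_le_div hω₀r0).2 (hω₀r1.trans hCr1))
  set N := (n : ℝ) * q with hNdef
  have hN0 : 0 ≤ N := by positivity
  set M := N * (Real.log 3 + Real.log 2 + 2 * c₂ * (1 + Real.log 2) + 2 * c₁) + K with hMdef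
  refine ⟨(1 + Real.exp M).toNNReal, Real.toNNReal_pos.2 (by positivity), fun z r hr => ?_⟩
  have hCoe : (((1 + Real.exp M).toNNReal : ℝ≥0) : ℝ≥0∞) = ENNReal.ofReal (1 + Real.exp M) :=
    rfl
  have hexpM : (0:ℝ) < Real.exp M := Real.exp_pos M
  by_cases hzero : volume (ball z r ∩ Ω) = 0
  · rw [Measure.restrict_eq_zero.2 hzero, essSup_measure_zero, essInf_measure_zero]
    have hexp0 : ((⊥ : ℝ≥0∞)⁻¹).toReal - ((⊤ : ℝ≥0∞)⁻¹).toReal = 0 := by simp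
    rw [hexp0, ENNReal.rpow_zero, hCoe, ← ENNReal.ofReal_one]
    exact ENNReal.ofReal_le_ofReal (by linarith)
  -- main case
  set μ := volume.restrict (ball z r ∩ Ω) with hμdef
  have hμ0 : μ ≠ 0 := by rw [hμdef, Ne, Measure.restrict_eq_zero]; exact hzero
  haveI : (ae μ).NeBot := ae_neBot.mpr hμ0
  have hmem : ∀ᵐ x ∂μ, x ∈ ball z r ∩ Ω :=
    ae_restrict_mem (isOpen_ball.inter hΩ).measurableSet
  set S := essSup p μ with hSdef
  set I := essInf p μ with hIdef
  have hI1 : 1 ≤ I := le_essInf_of_ae_le 1 (hmem.mono fun x hx => hp1 x hx.2)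
  set b := (S⁻¹).toReal with hbdef
  set a := (I⁻¹).toReal with hadef
  have hb0 : 0 ≤ b := ENNReal.toReal_nonneg
  have hIS : I ≤ S := by
    obtain ⟨x, hx1, hx2⟩ := ((ae_essInf_le (f := p) (μ := μ)).and (ENNReal.ae_le_essSup p)).exists
    exact hx1.trans hx2
  have hS0 : S ≠ 0 := (one_pos.trans_le (hI1.trans hIS)).ne'
  have hba : b ≤ a := by
    refine ENNReal.toReal_mono ?_ (ENNReal.inv_le_inv.2 hIS)
    exact ENNReal.inv_ne_top.2 (one_pos.trans_le hI1).ne'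
  -- quantities for the oscillation bound
  have he2 : (2:ℝ) ≤ Real.exp 1 := by nlinarith [Real.add_one_le_exp 1]
  set D₁ := Real.log (Real.exp 1 + 1 / (2 * r)) with hD₁def
  set D₂ := Real.log (Real.exp 1 + max 0 (‖z‖ - r)) with hD₂def
  have h2r : (0:ℝ) < 1 / (2 * r) := by positivity
  have hD₁1 : 1 ≤ D₁ := by
    have := Real.log_le_log (Real.exp_pos 1)
      (show Real.exp 1 ≤ Real.exp 1 + 1 / (2 * r) by linarith)
    rwa [Real.log_exp] at this
  have hD₂1 : 1 ≤ D₂ := by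
    have := Real.log_le_log (Real.exp_pos 1)
      (show Real.exp 1 ≤ Real.exp 1 + max 0 (‖z‖ - r) by
        have := le_max_left (0:ℝ) (‖z‖ - r); linarith)
    rwa [Real.log_exp] at this
  have hD₁0 : (0:ℝ) < D₁ := by linarith
  have hD₂0 : (0:ℝ) < D₂ := by linarith
  set εr := min 1 (min (c₁ / D₁) (2 * c₂ / D₂)) with hεdef
  have hε0 : 0 ≤ εr := le_min zero_le_one (le_min (by positivity) (by positivity))
  -- oscillation bound
  have hosc : ∀ x ∈ ball z r ∩ Ω, ∀ y ∈ ball z r ∩ Ω,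
      invExp p x - invExp p y ≤ εr := by
    intro x hx y hy
    refine le_min ?_ (le_min ?_ ?_)
    · have h1 : invExp p x ≤ 1 := by
        rw [hinv]
        have := ENNReal.toReal_mono ENNReal.one_ne_top
          (ENNReal.inv_le_one.2 (hp1 x hx.2))
        simpa using this
      have h2 : 0 ≤ invExp p y := ENNReal.toReal_nonneg
      linarith
    · rcases eq_or_ne x y with rfl | hxy
      · simp only [sub_self]
        positivity
      · have hd0 : 0 < dist x y := dist_pos.2 hxy
        have hd2r : dist x y < 2 * r := by
          have h1 := mem_ball.1 hx.1
          have h2 := mem_ball.1 hy.1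
          have h3 : dist x y ≤ dist x z + dist y z := dist_triangle_right x y z
          linarith
        have hle := hHol x hx.2 y hy.2
        have hlog_le : D₁ ≤ Real.log (Real.exp 1 + 1 / dist x y) := by
          rw [hD₁def]
          apply Real.log_le_log (by positivity)
          have : 1 / (2 * r) ≤ 1 / dist x y :=
            one_div_le_one_div_of_le hd0 hd2r.le
          linarith
        calc invExp p x - invExp p y ≤ |invExp p x - invExp p y| := le_abs_self _
          _ ≤ c₁ / Real.log (Real.exp 1 + 1 / dist x y) := hle
          _ ≤ c₁ / D₁ := div_le_div_of_nonneg_left hc₁.le hD₁0 hlog_le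
    · have h1 := hDec x hx.2
      have h2 := hDec y hy.2
      have hxn : max 0 (‖z‖ - r) ≤ ‖x‖ := by
        apply max_le (norm_nonneg x)
        have hd := mem_ball.1 hx.1
        have h3 : ‖z‖ - ‖x‖ ≤ ‖z - x‖ := norm_sub_norm_le z x
        have h4 : ‖z - x‖ = dist x z := by rw [dist_eq_norm, norm_sub_rev]
        linarith
      have hyn : max 0 (‖z‖ - r) ≤ ‖y‖ := by
        apply max_le (norm_nonneg y)
        have hd := mem_ball.1 hy.1
        have h3 : ‖z‖ - ‖y‖ ≤ ‖z - y‖ := norm_sub_norm_le z y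
        have h4 : ‖z - y‖ = dist y z := by rw [dist_eq_norm, norm_sub_rev]
        linarith
      have hbx : c₂ / Real.log (Real.exp 1 + ‖x‖) ≤ c₂ / D₂ := by
        apply div_le_div_of_nonneg_left hc₂.le hD₂0
        rw [hD₂def]
        apply Real.log_le_log (by positivity) (by linarith)
      have hby : c₂ / Real.log (Real.exp 1 + ‖y‖) ≤ c₂ / D₂ := by
        apply div_le_div_of_nonneg_left hc₂.le hD₂0
        rw [hD₂def]
        apply Real.log_le_log (by positivity) (by linarith)
      have h5 := le_abs_self (invExp p x - (pinf⁻¹).toReal)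
      have h6 := neg_abs_le (invExp p y - (pinf⁻¹).toReal)
      have : 2 * c₂ / D₂ = c₂ / D₂ + c₂ / D₂ := by ring
      linarith
  -- key oscillation estimate on essSup/essInf
  have hkey2 : a ≤ b + εr := by
    rcases eq_or_ne I ∞ with hItop | hItop
    · rw [hadef, hItop]
      simp only [ENNReal.inv_top, ENNReal.toReal_zero]
      positivity
    by_contra hcon
    push_neg at hcon
    set η := (a - b - εr) / 3 with hηdef
    have hη0 : 0 < η := by rw [hηdef]; linarith
    have hηofr0 : ENNReal.ofReal η ≠ 0 := (ENNReal.ofReal_pos.2 hη0).ne'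
    have hIlt : I < I + ENNReal.ofReal η := ENNReal.lt_add_right hItop hηofr0
    have hfreq1 : ∃ᵐ x ∂μ, p x < I + ENNReal.ofReal η := by
      by_contra hc
      rw [not_frequently] at hc
      have hle : I + ENNReal.ofReal η ≤ I :=
        le_essInf_of_ae_le _ (hc.mono fun x hx => not_lt.1 hx)
      exact absurd hle (not_le.2 hIlt)
    obtain ⟨x₁, hx₁lt, hx₁mem⟩ := (hfreq1.and_eventually hmem).exists
    obtain ⟨t', ht'S, ht'0, ht'b⟩ :
        ∃ t' : ℝ≥0∞, t' < S ∧ t' ≠ 0 ∧ (t'⁻¹).toReal ≤ b + η := by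
      rcases eq_or_ne S ∞ with hStop | hStop
      · refine ⟨ENNReal.ofReal (max 1 η⁻¹), ?_, ?_, ?_⟩
        · rw [hStop]; exact ENNReal.ofReal_lt_top
        · exact (ENNReal.ofReal_pos.2 (lt_of_lt_of_le one_pos (le_max_left _ _))).ne'
        · rw [← ENNReal.ofReal_inv_of_pos (lt_of_lt_of_le one_pos (le_max_left _ _)),
            ENNReal.toReal_ofReal (by positivity)]
          have h7 : (max 1 η⁻¹)⁻¹ ≤ (η⁻¹)⁻¹ :=
            inv_anti₀ (inv_pos.2 hη0) (le_max_right _ _)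
          rw [inv_inv] at h7
          linarith
      · have hSr1 : 1 ≤ S.toReal := by
          have := ENNReal.toReal_mono hStop (hI1.trans hIS)
          simpa using this
        have hSr0 : 0 < S.toReal := by linarith
        have hden : (0:ℝ) < 1 + η * S.toReal := by positivity
        refine ⟨ENNReal.ofReal (S.toReal / (1 + η * S.toReal)), ?_, ?_, ?_⟩
        · calc ENNReal.ofReal (S.toReal / (1 + η * S.toReal))
              < ENNReal.ofReal S.toReal := by
                apply (ENNReal.ofReal_lt_ofReal_iff hSr0).2
                apply div_lt_self hSr0
                nlinarith
            _ = S := ENNReal.ofReal_toReal hStop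
        · exact (ENNReal.ofReal_pos.2 (by positivity)).ne'
        · rw [← ENNReal.ofReal_inv_of_pos (by positivity),
            ENNReal.toReal_ofReal (by positivity)]
          have h8 : (S.toReal / (1 + η * S.toReal))⁻¹ = S.toReal⁻¹ + η := by
            field_simp
          rw [h8, hbdef, ENNReal.toReal_inv]
    have hfreq2 : ∃ᵐ x ∂μ, t' < p x := by
      by_contra hc
      rw [not_frequently] at hc
      have hle : S ≤ t' := essSup_le_of_ae_le _ (hc.mono fun x hx => not_lt.1 hx)
      exact absurd hle (not_le.2 ht'S)
    obtain ⟨x₀, hx₀gt, hx₀mem⟩ := (hfreq2.and_eventually hmem).exists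
    have hIr1 : 1 ≤ I.toReal := by
      have := ENNReal.toReal_mono hItop hI1
      simpa using this
    have h1 : a ≤ ((I + ENNReal.ofReal η)⁻¹).toReal + η := by
      rw [hadef, ENNReal.toReal_inv, ENNReal.toReal_inv,
        ENNReal.toReal_add hItop ENNReal.ofReal_ne_top, ENNReal.toReal_ofReal hη0.le]
      have hIr0 : (0:ℝ) < I.toReal := by linarith
      have hstep : I.toReal⁻¹ - (I.toReal + η)⁻¹ = η / (I.toReal * (I.toReal + η)) := by
        field_simp
        ring
      have hstep2 : η / (I.toReal * (I.toReal + η)) ≤ η := by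
        apply div_le_self hη0.le
        nlinarith
      linarith
    have h2 : ((I + ENNReal.ofReal η)⁻¹).toReal ≤ ((p x₁)⁻¹).toReal := by
      refine ENNReal.toReal_mono ?_ (ENNReal.inv_le_inv.2 hx₁lt.le)
      exact ENNReal.inv_ne_top.2 (one_pos.trans_le (hp1 x₁ hx₁mem.2)).ne'
    have h3 : ((p x₁)⁻¹).toReal - ((p x₀)⁻¹).toReal ≤ εr := by
      have := hosc x₁ hx₁mem x₀ hx₀mem
      rwa [hinv, hinv] at this
    have h4 : ((p x₀)⁻¹).toReal ≤ (t'⁻¹).toReal :=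
      ENNReal.toReal_mono (ENNReal.inv_ne_top.2 ht'0) (ENNReal.inv_le_inv.2 hx₀gt.le)
    have hfin : a ≤ b + εr + 2 * η := by linarith
    rw [hηdef] at hfin
    linarith
  -- lower bound for the weight of the ball
  set R := r + ‖z‖ + 1 with hRdef
  have hR0 : 0 < R := by have := norm_nonneg z; rw [hRdef]; linarith
  have hrR : r ≤ R := by have := norm_nonneg z; rw [hRdef]; linarith
  have hsub01 : ball (0 : Rn n) 1 ⊆ ball z R := by
    intro u hu
    rw [mem_ball] at hu ⊢
    calc dist u z ≤ dist u 0 + dist 0 z := dist_triangle u 0 z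
      _ < 1 + ‖z‖ := by
          rw [dist_zero_right] at hu
          rw [dist_zero_right, dist_zero_left]
          · linarith
      _ ≤ R := by rw [hRdef]; linarith
  have hw0 : wSet ω (ball z r) ≠ 0 := wSet_ball_pos hωm hωae z hr
  have hwt : wSet ω (ball z r) ≠ ∞ := hωfin z r hr
  have hWt : wSet ω (ball z R) ≠ ∞ := hωfin z R hR0
  have hω₀W : ω₀ ≤ wSet ω (ball z R) :=
    le_trans (min_le_left _ _) (lintegral_mono_set hsub01)
  have hV0 : volume (ball z R) ≠ 0 := (measure_ball_pos volume z hR0).ne'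
  have hVt : volume (ball z R) ≠ ∞ := measure_ball_lt_top.ne
  have hVq0 : volume (ball z R) ^ q ≠ 0 :=
    (ENNReal.rpow_pos (pos_iff_ne_zero.2 hV0) hVt).ne'
  have hVqt : volume (ball z R) ^ q ≠ ∞ := ENNReal.rpow_ne_top_of_nonneg hq0.le hVt
  set X := ∫⁻ y in ball z R, (ω y) ^ (-(1 / (q - 1))) with hXdef
  have hXle : wSet ω (ball z R) * X ^ (q - 1) ≤ (C₀ + 1) * volume (ball z R) ^ q := by
    have h := hAq z R hR0
    rw [ENNReal.rpow_neg, mul_assoc] at h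
    have h2 := (ENNReal.inv_mul_le_iff hVq0 hVqt).1 h
    calc wSet ω (ball z R) * X ^ (q - 1) ≤ volume (ball z R) ^ q * C₀ := h2
      _ ≤ volume (ball z R) ^ q * (C₀ + 1) := mul_le_mul_right le_self_add _
      _ = (C₀ + 1) * volume (ball z R) ^ q := mul_comm _ _
  set q' := q / (q - 1) with hq'def
  have hconj : q.HolderConjugate q' := Real.HolderConjugate.conjExponent hq1
  have hq10 : q - 1 ≠ 0 := by intro h; rw [sub_eq_zero] at h; exact absurd h.symm hq1.ne
  have hmeasf : AEMeasurable (fun y => (ω y) ^ (1 / q)) (volume.restrict (ball z r)) :=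
    hωm.aemeasurable.pow_const _
  have hmeasg : AEMeasurable (fun y => (ω y) ^ (-(1 / q))) (volume.restrict (ball z r)) :=
    hωm.aemeasurable.pow_const _
  have hhold := ENNReal.lintegral_mul_le_Lp_mul_Lq (volume.restrict (ball z r)) hconj
    hmeasf hmeasg
  have hone : (∫⁻ y in ball z r,
      ((fun y => (ω y) ^ (1 / q)) * fun y => (ω y) ^ (-(1 / q))) y) = volume (ball z r) := by
    rw [← setLIntegral_one]
    apply lintegral_congr_ae
    apply ae_restrict_of_ae
    filter_upwards [hωae] with y hy
    simp only [Pi.mul_apply]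
    rw [← ENNReal.rpow_add _ _ hy.1.ne' hy.2.ne]
    norm_num
  set Y := ∫⁻ y in ball z r, (ω y) ^ (-(1 / (q - 1))) with hYdef
  have hfq : (∫⁻ y in ball z r, ((ω y) ^ (1 / q)) ^ q) = wSet ω (ball z r) := by
    rw [wSet]
    apply lintegral_congr fun y => ?_
    rw [← ENNReal.rpow_mul, one_div, inv_mul_cancel₀ hq0.ne', ENNReal.rpow_one]
  have hgq : (∫⁻ y in ball z r, ((ω y) ^ (-(1 / q))) ^ q') = Y := by
    rw [hYdef]
    apply lintegral_congr fun y => ?_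
    rw [← ENNReal.rpow_mul]
    congr 1
    rw [hq'def]
    field_simp
  have hL : volume (ball z r) ≤
      (wSet ω (ball z r)) ^ (1 / q) * Y ^ (1 / q') := by
    rw [← hone]
    refine hhold.trans (le_of_eq ?_)
    rw [hfq, hgq]
  have hYX : Y ≤ X := lintegral_mono_set (ball_subset_ball hrR)
  have hLq : volume (ball z r) ^ q ≤ wSet ω (ball z r) * Y ^ (q - 1) := by
    calc volume (ball z r) ^ q
        ≤ ((wSet ω (ball z r)) ^ (1 / q) * Y ^ (1 / q')) ^ q :=
          ENNReal.rpow_le_rpow hL hq0.le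
      _ = ((wSet ω (ball z r)) ^ (1 / q)) ^ q * (Y ^ (1 / q')) ^ q :=
          ENNReal.mul_rpow_of_nonneg _ _ hq0.le
      _ = wSet ω (ball z r) * Y ^ (q - 1) := by
          rw [← ENNReal.rpow_mul, ← ENNReal.rpow_mul, one_div,
            inv_mul_cancel₀ hq0.ne', ENNReal.rpow_one]
          congr 1
          rw [hq'def]
          field_simp
  have hkey : volume (ball z r) ^ q * ω₀ ≤
      wSet ω (ball z r) * ((C₀ + 1) * volume (ball z R) ^ q) := by
    calc volume (ball z r) ^ q * ω₀
        ≤ (wSet ω (ball z r) * Y ^ (q - 1)) * wSet ω (ball z R) :=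
          mul_le_mul' hLq hω₀W
      _ = wSet ω (ball z r) * (wSet ω (ball z R) * Y ^ (q - 1)) := by ring
      _ ≤ wSet ω (ball z r) * (wSet ω (ball z R) * X ^ (q - 1)) := by
          exact mul_le_mul_right
            (mul_le_mul_right (ENNReal.rpow_le_rpow hYX (by linarith)) _) _
      _ ≤ _ := mul_le_mul_right hXle _
  -- convert to the reals
  have hwr0 : 0 < (wSet ω (ball z r)).toReal := ENNReal.toReal_pos hw0 hwt
  have hιr0 : 0 < (volume (ball (0:Rn n) 1)).toReal := ENNReal.toReal_pos hι0 hιt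
  have hvEr : (volume (ball z r)).toReal = r ^ n * (volume (ball (0:Rn n) 1)).toReal := by
    rw [vol_ball_eq n z hr, ENNReal.toReal_mul, ENNReal.toReal_ofReal (by positivity)]
  have hVr : (volume (ball z R)).toReal = R ^ n * (volume (ball (0:Rn n) 1)).toReal := by
    rw [vol_ball_eq n z hR0, ENNReal.toReal_mul, ENNReal.toReal_ofReal (by positivity)]
  have hVr0 : 0 < (volume (ball z R)).toReal := by rw [hVr]; positivity
  have hvEr0 : 0 < (volume (ball z r)).toReal := by rw [hvEr]; positivity
  have hkeyr : (volume (ball z r)).toReal ^ q * ω₀r ≤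
      (wSet ω (ball z r)).toReal * (Cr * (volume (ball z R)).toReal ^ q) := by
    have hfin : wSet ω (ball z r) * ((C₀ + 1) * volume (ball z R) ^ q) ≠ ∞ :=
      ENNReal.mul_ne_top hwt (ENNReal.mul_ne_top hC't hVqt)
    have h := ENNReal.toReal_mono hfin hkey
    rwa [ENNReal.toReal_mul, ENNReal.toReal_mul, ENNReal.toReal_mul,
      ← ENNReal.toReal_rpow, ← ENNReal.toReal_rpow] at h
  have hcalc : (volume (ball z r)).toReal ^ q =
      (r / R) ^ ((n:ℝ) * q) * (volume (ball z R)).toReal ^ q := by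
    rw [Real.rpow_mul (by positivity), Real.rpow_natCast,
      ← Real.mul_rpow (by positivity) (by positivity)]
    congr 1
    rw [hvEr, hVr, div_pow]
    field_simp
  set l := (r / R) ^ ((n:ℝ) * q) * (ω₀r / Cr) with hldef
  have hl0 : 0 < l := by
    have : (0:ℝ) < r / R := by positivity
    rw [hldef]
    positivity
  have hCr0 : (0:ℝ) < Cr := by linarith
  have hlw : l ≤ (wSet ω (ball z r)).toReal := by
    have hpos : 0 < Cr * (volume (ball z R)).toReal ^ q := by positivity
    rw [← mul_le_mul_iff_of_pos_right hpos]
    calc l * (Cr * (volume (ball z R)).toReal ^ q)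
        = (volume (ball z r)).toReal ^ q * ω₀r := by
          rw [hldef, hcalc]
          field_simp
      _ ≤ _ := hkeyr
  have hlog1 : Real.log l⁻¹ = N * Real.log ((r + ‖z‖ + 1) / r) + K := by
    have hrR0 : (0:ℝ) < r / R := by positivity
    have hgoal2 : Real.log ((r + ‖z‖ + 1) / r) = Real.log (R / r) := by rw [hRdef]
    rw [hgoal2, Real.log_inv, hldef, Real.log_mul (by positivity) (by positivity),
      Real.log_rpow hrR0, hKdef, hNdef,
      Real.log_div hr.ne' hR0.ne', Real.log_div hR0.ne' hr.ne',
      Real.log_div hω₀r0.ne' hCr0.ne', Real.log_div hCr0.ne' hω₀r0.ne']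
    ring
  -- final computation
  have hcore : εr * (N * Real.log ((r + ‖z‖ + 1) / r) + K) ≤ M := by
    rw [hεdef, hD₁def, hD₂def, hMdef]
    exact core_ineq c₁ c₂ N K r ‖z‖ hc₁ hc₂ hN0 hK0 hr (norm_nonneg z)
  rw [show wSet ω (ball z r) = ENNReal.ofReal (wSet ω (ball z r)).toReal from
    (ENNReal.ofReal_toReal hwt).symm]
  rw [ENNReal.ofReal_rpow_of_pos hwr0, hCoe]
  apply ENNReal.ofReal_le_ofReal
  rcases le_or_gt 1 (wSet ω (ball z r)).toReal with h1w | h1w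
  · calc (wSet ω (ball z r)).toReal ^ (b - a)
        ≤ (wSet ω (ball z r)).toReal ^ (0:ℝ) :=
          Real.rpow_le_rpow_of_exponent_le h1w (by linarith)
      _ = 1 := Real.rpow_zero _
      _ ≤ 1 + Real.exp M := by linarith
  · have h2 : (wSet ω (ball z r)).toReal ^ (b - a) ≤
        (wSet ω (ball z r)).toReal ^ (-εr) :=
      Real.rpow_le_rpow_of_exponent_ge hwr0 h1w.le (by linarith)
    have h3 : (wSet ω (ball z r)).toReal ^ (-εr) = ((wSet ω (ball z r)).toReal⁻¹) ^ εr := by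
      rw [Real.rpow_neg hwr0.le, ← Real.inv_rpow hwr0.le]
    have h4 : ((wSet ω (ball z r)).toReal⁻¹) ^ εr ≤ (l⁻¹) ^ εr := by
      apply Real.rpow_le_rpow (by positivity) ?_ hε0
      exact inv_anti₀ hl0 hlw
    have h5 : (l⁻¹) ^ εr = Real.exp (Real.log l⁻¹ * εr) := by
      rw [Real.rpow_def_of_pos (by positivity)]
    have h6 : Real.log l⁻¹ * εr ≤ M := by
      rw [hlog1, mul_comm]
      exact hcore
    calc (wSet ω (ball z r)).toReal ^ (b - a)
        ≤ (l⁻¹) ^ εr := by rw [h3] at h2; exact h2.trans h4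
      _ = Real.exp (Real.log l⁻¹ * εr) := h5
      _ ≤ Real.exp M := Real.exp_le_exp.2 h6
      _ ≤ 1 + Real.exp M := by linarith
end
end
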